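/- arXiv:2507.02889 — 2 statements merged into one kernel-verified Lean document; each statement's English description precedes it below -/
import Mathlib

section
/- Let α > 0, β > 0, γ > 1, λ ∈ ℝ, and let s > 0 be a real number. Then ∫₀^∞ e^{−st} · (∑_{k=0}^∞ k · λ^k · t^{αk+β−1} · (ln t − γ · ψ(αk+β)) / Γ(αk+β)^γ) dt = − (1/s^β) · ∑_{k=0}^∞ k · (λ · s^{−α})^k · (ln s + (γ−1) · ψ(αk+β)) / Γ(αk+β)^{γ−1}. (The integrand series is the term-by-term derivative with respect to α of t^{β−1} F^{(γ)}_{α,β}(λ t^α).) -/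
open Real MeasureTheory
open Set Filter
open scoped Topology

/-- The digamma function `ψ(x) = the logarithmic derivative of Γ`, i.e. the derivative of `log ∘ Γ`. -/
noncomputable def digamma (x : ℝ) : ℝ := deriv (fun y : ℝ => Real.log (Real.Gamma y)) x



lemma abs_log_le_rpow {ε t : ℝ} (hε : 0 < ε) (ht : 0 < t) :
    |Real.log t| ≤ (t ^ ε + t ^ (-ε)) / ε := by
  have key : ∀ u : ℝ, 0 < u → Real.log u ≤ u ^ ε / ε := by
    intro u hu
    have h1 : Real.log (u ^ ε) ≤ u ^ ε - 1 := Real.log_le_sub_one_of_pos (Real.rpow_pos_of_pos hu ε)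
    rw [Real.log_rpow hu] at h1
    rw [div_eq_inv_mul, ← mul_le_mul_iff_right₀ hε, ← mul_assoc, mul_inv_cancel₀ hε.ne', one_mul]
    nlinarith [Real.rpow_pos_of_pos hu ε]
  have hd1 : 0 ≤ t ^ ε / ε := le_of_lt (div_pos (Real.rpow_pos_of_pos ht ε) hε)
  have hd2 : 0 ≤ t ^ (-ε) / ε := le_of_lt (div_pos (Real.rpow_pos_of_pos ht (-ε)) hε)
  have h1 := key t ht
  have h2 := key t⁻¹ (inv_pos.mpr ht)
  rw [Real.log_inv, Real.inv_rpow ht.le, ← Real.rpow_neg ht.le] at h2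
  rw [abs_le, add_div]
  constructor <;> linarith


lemma integrableOn_exp_mul_rpow {s c : ℝ} (hs : 0 < s) (hc : 0 < c) :
    IntegrableOn (fun t : ℝ => Real.exp (-(s * t)) * t ^ (c - 1)) (Ioi 0) := by
  have h0 : IntegrableOn (fun x : ℝ => Real.exp (-x) * x ^ (c - 1)) (Ioi 0) :=
    Real.GammaIntegral_convergent hc
  have h1 : IntegrableOn (fun x : ℝ => Real.exp (-(s * x)) * (s * x) ^ (c - 1)) (Ioi 0) := by
    have := (integrableOn_Ioi_comp_mul_left_iff
      (fun x : ℝ => Real.exp (-x) * x ^ (c - 1)) 0 hs).mpr (by simpa using h0)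
    simpa using this
  have h2 : IntegrableOn (fun x : ℝ => s ^ (1 - c : ℝ) * (Real.exp (-(s * x)) * (s * x) ^ (c - 1)))
      (Ioi 0) := by exact h1.const_mul (s ^ (1 - c : ℝ))
  refine h2.congr_fun (fun x hx => ?_) measurableSet_Ioi
  have hx : (0 : ℝ) < x := hx
  beta_reduce
  rw [Real.mul_rpow hs.le hx.le]
  rw [show s ^ (1-c) * (Real.exp (-(s*x)) * (s ^ (c-1) * x ^ (c-1)))
      = (s ^ (1-c) * s ^ (c-1)) * (Real.exp (-(s*x)) * x ^ (c-1)) by ring,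
    ← Real.rpow_add hs]
  norm_num

lemma aesm_exp_rpow_log (s c : ℝ) :
    AEStronglyMeasurable (fun t : ℝ => Real.exp (-(s * t)) * t ^ (c - 1) * Real.log t)
      (volume.restrict (Ioi 0)) := by
  refine ContinuousOn.aestronglyMeasurable ?_ measurableSet_Ioi
  refine ContinuousOn.mul (ContinuousOn.mul ?_ ?_) ?_
  · exact (Real.continuous_exp.comp (continuous_const.mul continuous_id).neg).continuousOn
  · exact fun x hx => (Real.continuousAt_rpow_const x (c-1) (Or.inl (ne_of_gt hx))).continuousWithinAt
  · exact Real.continuousOn_log.mono (fun x hx => ne_of_gt hx)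

lemma integrableOn_exp_mul_rpow_log {s c ε : ℝ} (hs : 0 < s) (hε : 0 < ε) (hεc : ε < c) :
    IntegrableOn (fun t : ℝ => Real.exp (-(s * t)) * t ^ (c - 1) * Real.log t) (Ioi 0) := by
  have hg : IntegrableOn (fun t : ℝ => (1/ε) * (Real.exp (-(s*t)) * t ^ (c + ε - 1)
      + Real.exp (-(s*t)) * t ^ (c - ε - 1))) (Ioi 0) :=
    (((integrableOn_exp_mul_rpow hs (by linarith)).add
      (integrableOn_exp_mul_rpow hs (by linarith))).smul (1/ε))
  refine Integrable.mono hg (aesm_exp_rpow_log s c) ?_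
  filter_upwards [ae_restrict_mem measurableSet_Ioi] with t ht
  have ht : (0 : ℝ) < t := ht
  have he : 0 < Real.exp (-(s*t)) := Real.exp_pos _
  have hr : (0:ℝ) < t ^ (c-1) := Real.rpow_pos_of_pos ht _
  rw [norm_mul, norm_mul, Real.norm_eq_abs, Real.norm_eq_abs, Real.norm_eq_abs,
    abs_of_pos he, abs_of_pos hr, Real.norm_eq_abs]
  have hb := abs_log_le_rpow hε ht
  have key : Real.exp (-(s*t)) * t ^ (c-1) * |Real.log t|
      ≤ Real.exp (-(s*t)) * t ^ (c-1) * ((t ^ ε + t ^ (-ε)) / ε) := by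
    apply mul_le_mul_of_nonneg_left hb (by positivity)
  refine key.trans (le_of_eq ?_)
  have e1 : t ^ (c-1) * t ^ ε = t ^ (c + ε - 1) := by
    rw [← Real.rpow_add ht]; ring_nf
  have e2 : t ^ (c-1) * t ^ (-ε) = t ^ (c - ε - 1) := by
    rw [← Real.rpow_add ht]; ring_nf
  have : Real.exp (-(s*t)) * t ^ (c-1) * ((t ^ ε + t ^ (-ε)) / ε)
      = (1/ε) * (Real.exp (-(s*t)) * (t ^ (c-1) * t ^ ε) + Real.exp (-(s*t)) * (t ^ (c-1) * t ^ (-ε))) := by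
    ring
  rw [this, e1, e2, abs_of_pos]
  positivity
-- L4: bound on the norm integral
lemma norm_integral_exp_mul_rpow_log_le {s c ε : ℝ} (hs : 0 < s) (hε : 0 < ε) (hεc : ε < c) :
    (∫ t in Ioi 0, |Real.exp (-(s * t)) * t ^ (c - 1) * Real.log t|)
      ≤ ((1/s) ^ (c+ε) * Real.Gamma (c+ε) + (1/s) ^ (c-ε) * Real.Gamma (c-ε)) / ε := by
  have hInt := integrableOn_exp_mul_rpow_log hs hε hεc
  have hg1 := integrableOn_exp_mul_rpow hs (show (0:ℝ) < c + ε by linarith)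
  have hg2 := integrableOn_exp_mul_rpow hs (show (0:ℝ) < c - ε by linarith)
  have hg : IntegrableOn (fun t : ℝ => (1/ε) * (Real.exp (-(s*t)) * t ^ (c + ε - 1)
      + Real.exp (-(s*t)) * t ^ (c - ε - 1))) (Ioi 0) := by
    exact (hg1.add hg2).const_mul (1/ε)
  have hmono : (∫ t in Ioi 0, |Real.exp (-(s * t)) * t ^ (c - 1) * Real.log t|)
      ≤ ∫ t in Ioi 0, (1/ε) * (Real.exp (-(s*t)) * t ^ (c + ε - 1)
        + Real.exp (-(s*t)) * t ^ (c - ε - 1)) := by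
    refine setIntegral_mono_on hInt.abs hg measurableSet_Ioi (fun t ht => ?_)
    have ht : (0 : ℝ) < t := ht
    have he : 0 < Real.exp (-(s*t)) := Real.exp_pos _
    have hr : (0:ℝ) < t ^ (c-1) := Real.rpow_pos_of_pos ht _
    rw [abs_mul, abs_mul, abs_of_pos he, abs_of_pos hr]
    have key := mul_le_mul_of_nonneg_left (abs_log_le_rpow hε ht)
      (show (0:ℝ) ≤ Real.exp (-(s*t)) * t ^ (c-1) by positivity)
    refine key.trans (le_of_eq ?_)
    have e1 : t ^ (c-1) * t ^ ε = t ^ (c + ε - 1) := by rw [← Real.rpow_add ht]; ring_nf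
    have e2 : t ^ (c-1) * t ^ (-ε) = t ^ (c - ε - 1) := by rw [← Real.rpow_add ht]; ring_nf
    rw [show Real.exp (-(s*t)) * t ^ (c-1) * ((t ^ ε + t ^ (-ε)) / ε)
      = (1/ε) * (Real.exp (-(s*t)) * (t ^ (c-1) * t ^ ε) + Real.exp (-(s*t)) * (t ^ (c-1) * t ^ (-ε))) by ring,
      e1, e2]
  refine hmono.trans (le_of_eq ?_)
  rw [MeasureTheory.integral_const_mul, MeasureTheory.integral_add hg1 hg2]
  have v1 : (∫ t in Ioi 0, Real.exp (-(s*t)) * t ^ (c + ε - 1)) = (1/s) ^ (c+ε) * Real.Gamma (c+ε) := by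
    rw [← Real.integral_rpow_mul_exp_neg_mul_Ioi (show (0:ℝ) < c + ε by linarith) hs]
    exact setIntegral_congr_fun measurableSet_Ioi (fun t ht => by ring)
  have v2 : (∫ t in Ioi 0, Real.exp (-(s*t)) * t ^ (c - ε - 1)) = (1/s) ^ (c-ε) * Real.Gamma (c-ε) := by
    rw [← Real.integral_rpow_mul_exp_neg_mul_Ioi (show (0:ℝ) < c - ε by linarith) hs]
    exact setIntegral_congr_fun measurableSet_Ioi (fun t ht => by ring)
  rw [v1, v2]
  ring
-- L5: derivative of real Gamma as an integral
lemma hasDerivAt_Gamma_real {a : ℝ} (ha : 0 < a) :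
    HasDerivAt Real.Gamma (∫ t in Ioi 0, Real.exp (-t) * t ^ (a - 1) * Real.log t) a := by
  have hc : HasDerivAt Complex.GammaIntegral
      (∫ t : ℝ in Ioi 0, (t:ℂ) ^ ((a:ℂ) - 1) * (Real.log t * Real.exp (-t))) a :=
    Complex.hasDerivAt_GammaIntegral (by simpa using ha)
  have hev : Complex.Gamma =ᶠ[nhds (a:ℂ)] Complex.GammaIntegral := by
    have hmem : {z : ℂ | 0 < z.re} ∈ nhds (a:ℂ) := by
      refine IsOpen.mem_nhds ?_ (by simpa using ha)
      exact isOpen_lt continuous_const Complex.continuous_re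
    filter_upwards [hmem] with z hz using Complex.Gamma_eq_integral hz
  have hc2 := hc.congr_of_eventuallyEq hev
  have hr := hc2.real_of_complex
  have hfun : (fun x : ℝ => (Complex.Gamma (x:ℂ)).re) = Real.Gamma := rfl
  rw [hfun] at hr
  convert hr using 1
  have : (∫ t : ℝ in Ioi 0, (t:ℂ) ^ ((a:ℂ) - 1) * (Real.log t * Real.exp (-t)))
      = ∫ t : ℝ in Ioi 0, ((Real.exp (-t) * t ^ (a - 1) * Real.log t : ℝ) : ℂ) := by
    refine setIntegral_congr_fun measurableSet_Ioi (fun t ht => ?_)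
    have ht : (0:ℝ) < t := ht
    rw [show (a:ℂ) - 1 = ((a - 1 : ℝ) : ℂ) by push_cast; ring,
      ← Complex.ofReal_cpow ht.le]
    push_cast
    ring
  rw [this]
  have cc : ∀ r : ℝ, Complex.ofReal r = @RCLike.ofReal ℂ _ r := fun r => rfl
  conv_rhs => enter [1, 2, t]; rw [cc]
  rw [_root_.integral_ofReal, ← cc, Complex.ofReal_re]

-- L6: digamma in terms of Gamma'
lemma deriv_Gamma_eq {a : ℝ} (ha : 0 < a) :
    deriv Real.Gamma a = Real.Gamma a * digamma a := by
  have hd : HasDerivAt Real.Gamma (deriv Real.Gamma a) a :=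
    (hasDerivAt_Gamma_real ha).differentiableAt.hasDerivAt
  have hlog : HasDerivAt (fun y : ℝ => Real.log (Real.Gamma y))
      (deriv Real.Gamma a / Real.Gamma a) a :=
    hd.log (Real.Gamma_pos_of_pos ha).ne'
  have : digamma a = deriv Real.Gamma a / Real.Gamma a := by
    rw [digamma, hlog.deriv]
  rw [this]
  field_simp

lemma integral_Gamma_log {a : ℝ} (ha : 0 < a) :
    (∫ t in Ioi 0, Real.exp (-t) * t ^ (a - 1) * Real.log t)
      = Real.Gamma a * digamma a := by
  rw [← (hasDerivAt_Gamma_real ha).deriv, deriv_Gamma_eq ha]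
-- value of the plain Laplace integral
lemma integral_exp_mul_rpow {s a : ℝ} (hs : 0 < s) (ha : 0 < a) :
    (∫ t in Ioi 0, Real.exp (-(s*t)) * t ^ (a-1)) = Real.Gamma a * s ^ (-a) := by
  rw [show (∫ t in Ioi 0, Real.exp (-(s*t)) * t ^ (a-1))
      = ∫ t in Ioi 0, t ^ (a-1) * Real.exp (-(s*t)) from
    setIntegral_congr_fun measurableSet_Ioi (fun t ht => by ring),
    Real.integral_rpow_mul_exp_neg_mul_Ioi ha hs, one_div, Real.inv_rpow hs.le,
    ← Real.rpow_neg hs.le]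
  ring

-- value of the Laplace integral with a log factor
lemma integral_exp_mul_rpow_log {s a : ℝ} (hs : 0 < s) (ha : 0 < a) :
    (∫ t in Ioi 0, Real.exp (-(s*t)) * t ^ (a-1) * Real.log t)
      = Real.Gamma a * s ^ (-a) * (digamma a - Real.log s) := by
  have key : ∀ t ∈ Ioi (0:ℝ), Real.exp (-(s*t)) * t ^ (a-1) * Real.log t
      = (fun u : ℝ => s^((1:ℝ)-a) * (Real.exp (-u) * u ^ (a-1) * (Real.log u - Real.log s))) (s * t) := by
    intro t ht
    have ht : (0:ℝ) < t := ht
    simp only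
    rw [Real.mul_rpow hs.le ht.le, Real.log_mul hs.ne' ht.ne',
      show Real.log s + Real.log t - Real.log s = Real.log t by ring,
      show s^((1:ℝ)-a) * (Real.exp (-(s*t)) * (s^(a-1) * t^(a-1)) * Real.log t)
        = (s^((1:ℝ)-a) * s^(a-1)) * (Real.exp (-(s*t)) * t^(a-1) * Real.log t) by ring,
      ← Real.rpow_add hs]
    norm_num
  rw [setIntegral_congr_fun measurableSet_Ioi key,
    integral_comp_mul_left_Ioi
      (fun u : ℝ => s^((1:ℝ)-a) * (Real.exp (-u) * u ^ (a-1) * (Real.log u - Real.log s))) 0 hs,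
    mul_zero]
  have hint1 : IntegrableOn (fun u : ℝ => Real.exp (-u) * u ^ (a-1) * Real.log u) (Ioi 0) := by
    have := integrableOn_exp_mul_rpow_log (s := 1) (c := a) (ε := a/2) one_pos (half_pos ha) (by linarith)
    simpa using this
  have hint2 : IntegrableOn (fun u : ℝ => Real.log s * (Real.exp (-u) * u ^ (a-1))) (Ioi 0) := by
    have := (Real.GammaIntegral_convergent ha).const_mul (Real.log s)
    exact this
  rw [MeasureTheory.integral_const_mul,
    show (fun u : ℝ => Real.exp (-u) * u ^ (a-1) * (Real.log u - Real.log s))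
      = (fun u : ℝ => Real.exp (-u) * u ^ (a-1) * Real.log u
          - Real.log s * (Real.exp (-u) * u ^ (a-1))) from funext (fun u => by ring),
    MeasureTheory.integral_sub hint1 hint2, MeasureTheory.integral_const_mul,
    integral_Gamma_log ha, ← Real.Gamma_eq_integral ha, smul_eq_mul,
    show s⁻¹ * (s^((1:ℝ)-a) * (Real.Gamma a * digamma a - Real.log s * Real.Gamma a))
      = (s⁻¹ * s^((1:ℝ)-a)) * (Real.Gamma a * digamma a - Real.log s * Real.Gamma a) by ring,
    ← Real.rpow_neg_one s, ← Real.rpow_add hs,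
    show (-1:ℝ) + (1 - a) = -a by ring]
  ring

-- digamma bound
lemma abs_digamma_mul_Gamma_le {a ε : ℝ} (hε : 0 < ε) (hεa : ε < a) :
    |digamma a| * Real.Gamma a ≤ (Real.Gamma (a+ε) + Real.Gamma (a-ε)) / ε := by
  have ha : 0 < a := hε.trans hεa
  have hΓ : 0 < Real.Gamma a := Real.Gamma_pos_of_pos ha
  have hval : Real.Gamma a * digamma a
      = ∫ u in Ioi 0, Real.exp (-u) * u ^ (a-1) * Real.log u := by
    have := integral_exp_mul_rpow_log (s := 1) one_pos ha
    simp only [one_mul, Real.log_one, Real.one_rpow, sub_zero, Real.rpow_neg_one] at this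
    rw [this]; ring
  have hbound : |∫ u in Ioi 0, Real.exp (-u) * u ^ (a-1) * Real.log u|
      ≤ (Real.Gamma (a+ε) + Real.Gamma (a-ε)) / ε := by
    rw [← Real.norm_eq_abs]
    refine (norm_integral_le_integral_norm _).trans ?_
    have := norm_integral_exp_mul_rpow_log_le (s := 1) one_pos hε hεa
    simp only [one_mul, one_div, inv_one, Real.one_rpow] at this
    refine le_trans (le_of_eq (setIntegral_congr_fun measurableSet_Ioi (fun t ht => ?_))) this
    simp only [Real.norm_eq_abs]
  calc |digamma a| * Real.Gamma a = |Real.Gamma a * digamma a| := by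
        rw [abs_mul, abs_of_pos hΓ]; ring
    _ ≤ _ := by rw [hval]; exact hbound
-- log-convexity: Γ(x+ε) ≤ Γ(x) x^ε for 0 ≤ ε ≤ 1, x > 0
lemma Gamma_add_le {x ε : ℝ} (hx : 0 < x) (hε : 0 ≤ ε) (hε1 : ε ≤ 1) :
    Real.Gamma (x + ε) ≤ Real.Gamma x * x ^ ε := by
  have hΓx : 0 < Real.Gamma x := Real.Gamma_pos_of_pos hx
  have hΓxε : 0 < Real.Gamma (x + ε) := Real.Gamma_pos_of_pos (by linarith)
  have hconv := Real.convexOn_log_Gamma.2 (mem_Ioi.mpr hx) (mem_Ioi.mpr (by linarith : (0:ℝ) < x + 1))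
    (by linarith : (0:ℝ) ≤ 1 - ε) hε (by ring)
  simp only [smul_eq_mul, Function.comp_apply] at hconv
  rw [show (1-ε) * x + ε * (x+1) = x + ε by ring] at hconv
  rw [Real.Gamma_add_one hx.ne', Real.log_mul hx.ne' hΓx.ne'] at hconv
  have h2 : Real.log (Real.Gamma (x+ε)) ≤ Real.log (Real.Gamma x) + ε * Real.log x := by nlinarith
  calc Real.Gamma (x+ε) ≤ Real.Gamma x * Real.exp (ε * Real.log x) := by
        rw [← Real.exp_log hΓxε, ← Real.exp_log hΓx, ← Real.exp_add]
        exact Real.exp_le_exp.mpr h2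
  _ = Real.Gamma x * x ^ ε := by rw [Real.rpow_def_of_pos hx, mul_comm ε]

-- lower ratio bound: Γ(x) * (x-1)^(min α 1) ≤ Γ(x+α) for x ≥ 2, α > 0
lemma Gamma_ratio_lower {x α : ℝ} (hx : 2 ≤ x) (hα : 0 < α) :
    Real.Gamma x * (x - 1) ^ (min α 1) ≤ Real.Gamma (x + α) := by
  have hx0 : (0:ℝ) < x := by linarith
  have hΓx : 0 < Real.Gamma x := Real.Gamma_pos_of_pos hx0
  rcases le_or_gt α 1 with h1 | h1
  · rw [min_eq_left h1]
    have hp : (0:ℝ) < x + α - 1 := by linarith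
    have hΓp : 0 < Real.Gamma (x + α - 1) := Real.Gamma_pos_of_pos hp
    have hΓq : 0 < Real.Gamma (x + α) := Real.Gamma_pos_of_pos (by linarith)
    have hconv := Real.convexOn_log_Gamma.2 (mem_Ioi.mpr hp)
      (mem_Ioi.mpr (by linarith : (0:ℝ) < x + α)) hα.le (by linarith : (0:ℝ) ≤ 1 - α) (by ring)
    simp only [smul_eq_mul, Function.comp_apply] at hconv
    rw [show α * (x + α - 1) + (1-α) * (x+α) = x by ring] at hconv
    have hgadd : Real.Gamma (x + α) = (x + α - 1) * Real.Gamma (x + α - 1) := by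
      have := Real.Gamma_add_one hp.ne'
      rw [show x + α - 1 + 1 = x + α by ring] at this
      exact this
    rw [hgadd, Real.log_mul hp.ne' hΓp.ne'] at hconv
    -- hconv : log Γ x ≤ α * log Γ(x+α-1) + (1-α) * (log (x+α-1) + log Γ(x+α-1))
    have h2 : Real.log (Real.Gamma x) + α * Real.log (x + α - 1)
        ≤ Real.log (Real.Gamma (x + α)) := by
      rw [hgadd, Real.log_mul hp.ne' hΓp.ne']
      nlinarith
    have := Real.exp_le_exp.mpr h2
    rw [Real.exp_add, Real.exp_log hΓx, Real.exp_log (by rw [hgadd]; positivity)] at this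
    refine le_trans ?_ this
    rw [Real.rpow_def_of_pos (show (0:ℝ) < x - 1 by linarith)]
    have hlog : Real.log (x-1) ≤ Real.log (x+α-1) := Real.log_le_log (by linarith) (by linarith)
    have hmul : Real.log (x-1) * α ≤ α * Real.log (x+α-1) := by
      rw [mul_comm]; exact mul_le_mul_of_nonneg_left hlog hα.le
    exact mul_le_mul_of_nonneg_left (Real.exp_le_exp.mpr hmul) hΓx.le
  · rw [min_eq_right h1.le, Real.rpow_one]
    have step1 : Real.Gamma (x + 1) ≤ Real.Gamma (x + α) := by
      refine Real.Gamma_strictMonoOn_Ici.monotoneOn ?_ ?_ (by linarith)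
      · simp [mem_Ici]; linarith
      · simp [mem_Ici]; linarith
    have step2 : Real.Gamma x * (x - 1) ≤ Real.Gamma (x + 1) := by
      rw [Real.Gamma_add_one hx0.ne']
      nlinarith
    linarith
lemma summable_of_eventually_le {f g : ℕ → ℝ}
    (h : ∀ᶠ k in atTop, 0 ≤ f k ∧ f k ≤ g k) (hg : Summable g) : Summable f := by
  obtain ⟨N, hN⟩ := eventually_atTop.mp h
  rw [← summable_nat_add_iff N]
  refine Summable.of_nonneg_of_le (fun i => (hN _ (Nat.le_add_left N i)).1)
    (fun i => (hN _ (Nat.le_add_left N i)).2) ?_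
  exact (summable_nat_add_iff N).mpr hg

lemma summable_master {α β γ δ q : ℝ} (hα : 0 < α) (hβ : 0 < β) (hγ : 1 < γ)
    (hq : 0 ≤ q) (hδ : δ ≤ 1) :
    Summable (fun k : ℕ => (k:ℝ) * q ^ k * Real.Gamma (α*k+β+δ) / Real.Gamma (α*k+β) ^ γ) := by
  rcases eq_or_lt_of_le hq with hq0 | hq
  · refine summable_of_ne_finset_zero (s := {0}) (fun k hk => ?_)
    have hk : k ≠ 0 := by simpa using hk
    rw [← hq0, zero_pow hk]
    ring
  have hatop : Tendsto (fun k : ℕ => α*k+β) atTop atTop := by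
    apply tendsto_atTop_add_const_right
    exact Tendsto.const_mul_atTop hα tendsto_natCast_atTop_atTop
  have hpos : ∀ k : ℕ, (0:ℝ) < α*k+β := fun k => by positivity
  have hΓpos : ∀ k : ℕ, (0:ℝ) < Real.Gamma (α*k+β) := fun k => Real.Gamma_pos_of_pos (hpos k)
  set m : ℝ := min α 1 with hm
  have hm0 : 0 < m := lt_min hα one_pos
  have hc : 0 < m * (γ - 1) := by
    apply mul_pos hm0; linarith
  set G : ℕ → ℝ := fun k => (k:ℝ) * q^k * ((α*k+β) * Real.Gamma (α*k+β) ^ ((1:ℝ)-γ)) with hG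
  have hGpos : ∀ k : ℕ, 1 ≤ k → 0 < G k := by
    intro k hk
    have : (0:ℝ) < (k:ℝ) := by exact_mod_cast hk
    have h2 : (0:ℝ) < Real.Gamma (α*k+β) ^ ((1:ℝ)-γ) := Real.rpow_pos_of_pos (hΓpos k) _
    have := hpos k
    positivity
  set U : ℕ → ℝ := fun k => 8 * q * (α*k+β-1) ^ (-(m * (γ-1))) with hU
  have hUtend : Tendsto U atTop (nhds 0) := by
    have h1 : Tendsto (fun k : ℕ => α*k+β-1) atTop atTop := by
      have h0 := tendsto_atTop_add_const_right atTop (β-1)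
        (Tendsto.const_mul_atTop hα tendsto_natCast_atTop_atTop)
      refine h0.congr (fun k => by ring)
    have h2 := ((tendsto_rpow_neg_atTop hc).comp h1).const_mul (8*q)
    simpa using h2
  have hGsum : Summable G := by
    refine summable_of_ratio_test_tendsto_lt_one one_pos ?_ ?_
    · filter_upwards [eventually_ge_atTop 1] with k hk
      exact (hGpos k hk).ne'
    · refine tendsto_of_tendsto_of_tendsto_of_le_of_le'
        (tendsto_const_nhds : Tendsto (fun _ : ℕ => (0:ℝ)) atTop (nhds 0)) hUtend
        (Eventually.of_forall (fun k => by positivity)) ?_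
      filter_upwards [eventually_ge_atTop 1, hatop.eventually_ge_atTop 2,
        hatop.eventually_ge_atTop α] with k hk1 ha2 haα
      set a : ℝ := α*k+β with hadef
      have hk1' : (1:ℝ) ≤ (k:ℝ) := by exact_mod_cast hk1
      have hΓ := hΓpos k
      have ha1 : (1:ℝ) ≤ a - 1 := by linarith
      have hrpos : (0:ℝ) < (a-1) ^ (m * (1-γ)) := Real.rpow_pos_of_pos (by linarith) _
      have hstep : Real.Gamma (a+α) ^ ((1:ℝ)-γ)
          ≤ Real.Gamma a ^ ((1:ℝ)-γ) * (a-1) ^ (m * (1-γ)) := by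
        have h0 := Gamma_ratio_lower (x := a) ha2 hα
        have h1 : (0:ℝ) < Real.Gamma a * (a-1) ^ m := by positivity
        have h2 := Real.rpow_le_rpow_of_nonpos h1 h0 (by linarith : (1:ℝ)-γ ≤ 0)
        rwa [Real.mul_rpow hΓ.le (by positivity), ← Real.rpow_mul (by linarith : (0:ℝ) ≤ a-1)]
          at h2
      have hGk1 : G (k+1) = ((k:ℝ)+1) * ((a+α) * (q * q^k * Real.Gamma (a+α) ^ ((1:ℝ)-γ))) := by
        rw [hG]
        push_cast
        rw [show α*((k:ℝ)+1)+β = a+α by rw [hadef]; ring]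
        ring
      have hkey : ((k:ℝ)+1)*(a+α) ≤ 8*((k:ℝ)*a) := by nlinarith
      have hmain : G (k+1) ≤ U k * G k := by
        rw [hGk1]
        calc ((k:ℝ)+1) * ((a+α) * (q * q^k * Real.Gamma (a+α) ^ ((1:ℝ)-γ)))
            ≤ ((k:ℝ)+1) * ((a+α) * (q * q^k * (Real.Gamma a ^ ((1:ℝ)-γ) * (a-1) ^ (m * (1-γ))))) := by
              have hkα : (0:ℝ) ≤ ((k:ℝ)+1) * (a+α) := by positivity
              have := mul_le_mul_of_nonneg_left hstep (by positivity : (0:ℝ) ≤ q * q^k)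
              nlinarith [mul_le_mul_of_nonneg_left this hkα]
          _ ≤ (8*((k:ℝ)*a)) * (q * q^k * (Real.Gamma a ^ ((1:ℝ)-γ) * (a-1) ^ (m * (1-γ)))) := by
              have h3 : ((k:ℝ)+1) * ((a+α) * (q * q^k * (Real.Gamma a ^ ((1:ℝ)-γ) * (a-1) ^ (m * (1-γ)))))
                  = (((k:ℝ)+1)*(a+α)) * (q * q^k * (Real.Gamma a ^ ((1:ℝ)-γ) * (a-1) ^ (m * (1-γ)))) := by ring
              rw [h3]
              refine mul_le_mul_of_nonneg_right hkey ?_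
              have h6 : (0:ℝ) < Real.Gamma a ^ ((1:ℝ)-γ) := Real.rpow_pos_of_pos hΓ _
              exact mul_nonneg (mul_nonneg hq.le (pow_nonneg hq.le k))
                (mul_nonneg h6.le hrpos.le)
          _ = U k * G k := by
              rw [hU, hG]
              have : (a-1) ^ (m * (1-γ)) = (a-1) ^ (-(m * (γ-1))) := by ring_nf
              rw [this]
              ring
      have hGk : 0 < G k := hGpos k hk1
      rw [Real.norm_eq_abs, Real.norm_eq_abs, abs_of_pos (hGpos (k+1) (by omega)), abs_of_pos hGk,
        div_le_iff₀ hGk]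
      exact hmain
  -- comparison
  refine summable_of_eventually_le ?_ hGsum
  have hatopδ : Tendsto (fun k : ℕ => α*k+β+δ) atTop atTop :=
    tendsto_atTop_add_const_right _ _ hatop
  filter_upwards [hatop.eventually_ge_atTop 2, hatopδ.eventually_ge_atTop 2] with k ha2 haδ2
  have hΓ := hΓpos k
  have hΓδ : 0 < Real.Gamma (α*k+β+δ) := Real.Gamma_pos_of_pos (by linarith)
  refine ⟨by
    have h8 : (0:ℝ) < Real.Gamma (α*k+β) ^ γ := Real.rpow_pos_of_pos hΓ _
    exact div_nonneg (mul_nonneg (mul_nonneg (Nat.cast_nonneg k) (pow_nonneg hq.le k)) hΓδ.le)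
      h8.le, ?_⟩
  have hgd : Real.Gamma (α*k+β+δ) ≤ Real.Gamma (α*k+β) * (α*k+β) := by
    rcases le_or_gt 0 δ with h0 | h0
    · calc Real.Gamma (α*k+β+δ) ≤ Real.Gamma (α*k+β) * (α*k+β) ^ δ :=
            Gamma_add_le (hpos k) h0 hδ
      _ ≤ Real.Gamma (α*k+β) * (α*k+β) ^ (1:ℝ) := by
          apply mul_le_mul_of_nonneg_left
            (Real.rpow_le_rpow_of_exponent_le (by linarith) hδ) hΓ.le
      _ = Real.Gamma (α*k+β) * (α*k+β) := by rw [Real.rpow_one]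
    · calc Real.Gamma (α*k+β+δ) ≤ Real.Gamma (α*k+β) := by
            refine Real.Gamma_strictMonoOn_Ici.monotoneOn ?_ ?_ (by linarith)
            · exact haδ2
            · exact ha2
      _ ≤ Real.Gamma (α*k+β) * (α*k+β) := by nlinarith
  calc (k:ℝ) * q^k * Real.Gamma (α*k+β+δ) / Real.Gamma (α*k+β) ^ γ
      ≤ (k:ℝ) * q^k * (Real.Gamma (α*k+β) * (α*k+β)) / Real.Gamma (α*k+β) ^ γ := by
        gcongr
    _ = G k := by
      simp only [hG]
      rw [Real.rpow_sub hΓ, Real.rpow_one]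
      ring
theorem laplace_deriv_alpha_LeRoy (α β γ lam s : ℝ) (hα : 0 < α) (hβ : 0 < β)
    (hγ : 1 < γ) (hs : 0 < s) :
    (∫ t in Set.Ioi (0 : ℝ), Real.exp (-(s * t)) *
        ∑' k : ℕ, (k : ℝ) * lam ^ k * t ^ (α * k + β - 1) *
          (Real.log t - γ * digamma (α * k + β)) / Real.Gamma (α * k + β) ^ γ)
      = -((1 / s ^ β) *
          ∑' k : ℕ, (k : ℝ) * (lam * s ^ (-α)) ^ k *
            (Real.log s + (γ - 1) * digamma (α * k + β)) /
              Real.Gamma (α * k + β) ^ (γ - 1)) := by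
  have hε0 : 0 < min (β/2) 2⁻¹ := lt_min (by linarith) (by norm_num)
  set ε : ℝ := min (β/2) 2⁻¹ with hεdef
  have hεβ : ε < β := lt_of_le_of_lt (min_le_left _ _) (by linarith)
  have hε1 : ε ≤ 1 := le_trans (min_le_right _ _) (by norm_num)
  have ha : ∀ k : ℕ, 0 < α*k+β := fun k => by positivity
  have haε : ∀ k : ℕ, ε < α*k+β := fun k => lt_of_lt_of_le hεβ (by nlinarith [(Nat.cast_nonneg k : (0:ℝ) ≤ (k:ℝ))])
  have hΓ : ∀ k : ℕ, 0 < Real.Gamma (α*k+β) := fun k => Real.Gamma_pos_of_pos (ha k)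
  set f : ℕ → ℝ → ℝ := fun k t => Real.exp (-(s*t)) * ((k:ℝ) * lam ^ k * t ^ (α*k+β-1) *
      (Real.log t - γ * digamma (α*k+β)) / Real.Gamma (α*k+β) ^ γ) with hf
  have hdecomp : ∀ k : ℕ, f k = fun t =>
      ((k:ℝ) * lam^k / Real.Gamma (α*k+β) ^ γ) *
        (Real.exp (-(s*t)) * t ^ (α*k+β-1) * Real.log t)
      - ((k:ℝ) * lam^k * (γ * digamma (α*k+β)) / Real.Gamma (α*k+β) ^ γ) *
        (Real.exp (-(s*t)) * t ^ (α*k+β-1)) := by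
    intro k; funext t; simp only [hf]; ring
  have hint : ∀ k : ℕ, IntegrableOn (f k) (Ioi 0) := by
    intro k
    rw [hdecomp k]
    exact ((integrableOn_exp_mul_rpow_log hs hε0 (haε k)).const_mul _).sub
      ((integrableOn_exp_mul_rpow hs (ha k)).const_mul _)
  -- per-term value
  have hval : ∀ k : ℕ, (∫ t in Ioi 0, f k t)
      = -(1 / s ^ β * ((k:ℝ) * (lam * s ^ (-α)) ^ k *
          (Real.log s + (γ - 1) * digamma (α*k+β)) / Real.Gamma (α*k+β) ^ (γ - 1))) := by
    intro k
    rw [hdecomp k]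
    rw [MeasureTheory.integral_sub ((integrableOn_exp_mul_rpow_log hs hε0 (haε k)).const_mul _)
      ((integrableOn_exp_mul_rpow hs (ha k)).const_mul _),
      MeasureTheory.integral_const_mul, MeasureTheory.integral_const_mul,
      integral_exp_mul_rpow_log hs (ha k), integral_exp_mul_rpow hs (ha k)]
    have e3 : (lam * s ^ (-α)) ^ k = lam ^ k * (s ^ (-α)) ^ k := mul_pow _ _ _
    have e2 : s ^ (-(α*k+β)) = (s ^ (-α)) ^ k * s ^ (-β) := by
      rw [← Real.rpow_natCast (s ^ (-α)) k, ← Real.rpow_mul hs.le, ← Real.rpow_add hs]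
      congr 1; push_cast; ring
    have e1 : Real.Gamma (α*k+β) ^ γ
        = Real.Gamma (α*k+β) ^ (γ-1) * Real.Gamma (α*k+β) := by
      rw [← Real.rpow_add_one (hΓ k).ne' (γ-1)]
      ring_nf
    have e4 : (1:ℝ) / s ^ β = s ^ (-β) := by rw [Real.rpow_neg hs.le, one_div]
    rw [e3, e2, e1, e4]
    have hΓ1 : Real.Gamma (α*k+β) ^ (γ-1) ≠ 0 := (Real.rpow_pos_of_pos (hΓ k) _).ne'
    field_simp
    ring
  -- norm integral bound
  have hB : ∀ k : ℕ, (∫ t in Ioi 0, ‖f k t‖)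
      ≤ ((k:ℝ) * |lam|^k / Real.Gamma (α*k+β) ^ γ) *
          (((1/s)^(α*k+β+ε) * Real.Gamma (α*k+β+ε)
            + (1/s)^(α*k+β-ε) * Real.Gamma (α*k+β-ε)) / ε)
        + ((k:ℝ) * |lam|^k * (γ * |digamma (α*k+β)|) / Real.Gamma (α*k+β) ^ γ) *
          (Real.Gamma (α*k+β) * s ^ (-(α*k+β))) := by
    intro k
    have hC : |(k:ℝ) * lam^k / Real.Gamma (α*k+β) ^ γ|
        = (k:ℝ) * |lam|^k / Real.Gamma (α*k+β) ^ γ := by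
      rw [abs_div, abs_mul, abs_pow, Nat.abs_cast,
        abs_of_pos (Real.rpow_pos_of_pos (hΓ k) γ)]
    have hD : |(k:ℝ) * lam^k * (γ * digamma (α*k+β)) / Real.Gamma (α*k+β) ^ γ|
        = (k:ℝ) * |lam|^k * (γ * |digamma (α*k+β)|) / Real.Gamma (α*k+β) ^ γ := by
      rw [abs_div, abs_mul, abs_mul, abs_mul, abs_pow, Nat.abs_cast,
        abs_of_pos (Real.rpow_pos_of_pos (hΓ k) γ), abs_of_pos (by linarith : (0:ℝ) < γ)]
    have step1 : (∫ t in Ioi 0, ‖f k t‖)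
        ≤ ∫ t in Ioi 0,
            (((k:ℝ) * |lam|^k / Real.Gamma (α*k+β) ^ γ) *
              |Real.exp (-(s*t)) * t ^ (α*k+β-1) * Real.log t|
            + ((k:ℝ) * |lam|^k * (γ * |digamma (α*k+β)|) / Real.Gamma (α*k+β) ^ γ) *
              (Real.exp (-(s*t)) * t ^ (α*k+β-1))) := by
      refine setIntegral_mono_on (hint k).norm
        (((integrableOn_exp_mul_rpow_log hs hε0 (haε k)).abs.const_mul _).add
          ((integrableOn_exp_mul_rpow hs (ha k)).const_mul _)) measurableSet_Ioi
        (fun t ht => ?_)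
      have ht : (0:ℝ) < t := ht
      set C : ℝ := (k:ℝ) * lam^k / Real.Gamma (α*k+β) ^ γ with hCdef
      set D : ℝ := (k:ℝ) * lam^k * (γ * digamma (α*k+β)) / Real.Gamma (α*k+β) ^ γ with hDdef
      set X : ℝ := Real.exp (-(s*t)) * t ^ (α*k+β-1) * Real.log t with hXdef
      set Y : ℝ := Real.exp (-(s*t)) * t ^ (α*k+β-1) with hYdef
      have hY : 0 < Y := by rw [hYdef]; positivity
      have h1 : f k t = C * X - D * Y := by rw [hdecomp k]
      rw [Real.norm_eq_abs, h1]
      calc |C * X - D * Y| ≤ |C * X| + |D * Y| := abs_sub _ _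
        _ = |C| * |X| + |D| * |Y| := by rw [abs_mul C X, abs_mul D Y]
        _ ≤ _ := by rw [hC, hD, abs_of_pos hY]
    refine step1.trans ?_
    rw [MeasureTheory.integral_add
      ((integrableOn_exp_mul_rpow_log hs hε0 (haε k)).abs.const_mul _)
      ((integrableOn_exp_mul_rpow hs (ha k)).const_mul _),
      MeasureTheory.integral_const_mul, MeasureTheory.integral_const_mul,
      integral_exp_mul_rpow hs (ha k)]
    refine add_le_add (mul_le_mul_of_nonneg_left
      (norm_integral_exp_mul_rpow_log_le hs hε0 (haε k)) (by positivity)) le_rfl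
  -- summability of norm integrals
  have hq0 : (0:ℝ) ≤ |lam| * (1/s) ^ α := by positivity
  have hsummB : Summable (fun k : ℕ => ∫ t in Ioi 0, ‖f k t‖) := by
    set q : ℝ := |lam| * (1/s) ^ α with hq
    have hs1 : (0:ℝ) < 1/s := by positivity
    have hsplit : ∀ (k : ℕ) (δ : ℝ), ((1:ℝ)/s)^(α*k+β+δ)
        = ((1/s)^α) ^ k * ((1/s)^β * (1/s)^δ) := by
      intro k δ
      rw [← Real.rpow_natCast ((1/s) ^ α) k, ← Real.rpow_mul hs1.le,
        ← Real.rpow_add hs1, ← Real.rpow_add hs1]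
      congr 1; push_cast; ring
    have hsa : ∀ k : ℕ, s ^ (-(α*k+β)) = ((1/s)^α) ^ k * (1/s)^β := by
      intro k
      have : s ^ (-(α*k+β)) = ((1:ℝ)/s) ^ (α*(k:ℝ)+β) := by
        rw [one_div, Real.inv_rpow hs.le, ← Real.rpow_neg hs.le]
      rw [this, ← Real.rpow_natCast ((1/s) ^ α) k, ← Real.rpow_mul hs1.le,
        ← Real.rpow_add hs1]
    set K1 : ℝ := ((1/s)^β * (1/s)^ε) / ε + γ * ((1/s)^β / ε) with hK1
    set K2 : ℝ := ((1/s)^β * (1/s)^(-ε)) / ε + γ * ((1/s)^β / ε) with hK2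
    have hsum1 := (summable_master hα hβ hγ hq0 hε1).mul_left K1
    have hsum2 := (summable_master (δ := -ε) hα hβ hγ hq0 (by linarith)).mul_left K2
    refine Summable.of_nonneg_of_le
      (fun k => integral_nonneg (fun t => norm_nonneg _))
      (fun k => (hB k).trans ?_) (hsum1.add hsum2)
    -- pointwise comparison of the bounds
    have hψ := abs_digamma_mul_Gamma_le hε0 (haε k)
    have hΓp : 0 < Real.Gamma (α*k+β+ε) := Real.Gamma_pos_of_pos (by linarith [ha k])
    have hΓm : 0 < Real.Gamma (α*k+β-ε) := Real.Gamma_pos_of_pos (by linarith [haε k])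
    have hΓγ : 0 < Real.Gamma (α*k+β) ^ γ := Real.rpow_pos_of_pos (hΓ k) γ
    have hterm2 : ((k:ℝ) * |lam|^k * (γ * |digamma (α*k+β)|) / Real.Gamma (α*k+β) ^ γ) *
          (Real.Gamma (α*k+β) * s ^ (-(α*k+β)))
        ≤ ((k:ℝ) * |lam|^k * γ / Real.Gamma (α*k+β) ^ γ) * (s ^ (-(α*k+β)) *
            ((Real.Gamma (α*k+β+ε) + Real.Gamma (α*k+β-ε)) / ε)) := by
      have h2 : (0:ℝ) ≤ (k:ℝ) * |lam|^k * γ / Real.Gamma (α*k+β) ^ γ * s ^ (-(α*k+β)) := by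
        positivity
      calc ((k:ℝ) * |lam|^k * (γ * |digamma (α*k+β)|) / Real.Gamma (α*k+β) ^ γ) *
            (Real.Gamma (α*k+β) * s ^ (-(α*k+β)))
          = ((k:ℝ) * |lam|^k * γ / Real.Gamma (α*k+β) ^ γ * s ^ (-(α*k+β))) *
            (|digamma (α*k+β)| * Real.Gamma (α*k+β)) := by ring
        _ ≤ ((k:ℝ) * |lam|^k * γ / Real.Gamma (α*k+β) ^ γ * s ^ (-(α*k+β))) *
            ((Real.Gamma (α*k+β+ε) + Real.Gamma (α*k+β-ε)) / ε) :=
          mul_le_mul_of_nonneg_left hψ h2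
        _ = _ := by ring
    refine (add_le_add le_rfl hterm2).trans (le_of_eq ?_)
    rw [hsplit k ε, show α*(k:ℝ)+β-ε = α*(k:ℝ)+β+(-ε) from by ring, hsplit k (-ε), hsa k]
    have hpow : ∀ j : ℕ, ((j:ℝ)) * |lam|^j * (((1/s)^α) ^ j) = (j:ℝ) * q ^ j := by
      intro j; rw [hq, mul_pow]; ring
    have hqk : q ^ k = |lam|^k * ((1/s)^α)^k := by rw [hq, mul_pow]
    simp only [hK1, hK2, hqk, div_eq_mul_inv]
    ring
  -- measurability and lintegral bound for integral_tsum
  have hmeas : ∀ k : ℕ, AEStronglyMeasurable (f k) (volume.restrict (Ioi 0)) :=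
    fun k => (hint k).aestronglyMeasurable
  have hlsum : (∑' k : ℕ, ∫⁻ t in Ioi 0, ‖f k t‖₊) ≠ ⊤ := by
    have heq : ∀ k : ℕ, (∫⁻ t in Ioi 0, ‖f k t‖₊)
        = ENNReal.ofReal (∫ t in Ioi 0, ‖f k t‖) :=
      fun k => (MeasureTheory.ofReal_integral_norm_eq_lintegral_enorm (hint k)).symm
    rw [tsum_congr heq,
      ← ENNReal.ofReal_tsum_of_nonneg (fun k => integral_nonneg (fun t => norm_nonneg _)) hsummB]
    exact ENNReal.ofReal_ne_top
  -- main computation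
  calc (∫ t in Ioi (0:ℝ), Real.exp (-(s * t)) *
        ∑' k : ℕ, (k : ℝ) * lam ^ k * t ^ (α * k + β - 1) *
          (Real.log t - γ * digamma (α * k + β)) / Real.Gamma (α * k + β) ^ γ)
      = ∫ t in Ioi (0:ℝ), ∑' k : ℕ, f k t := by
        refine MeasureTheory.integral_congr_ae (Eventually.of_forall (fun t => ?_))
        simp only [hf]
        exact (tsum_mul_left).symm
    _ = ∑' k : ℕ, ∫ t in Ioi (0:ℝ), f k t := MeasureTheory.integral_tsum hmeas hlsum
    _ = ∑' k : ℕ, -(1 / s ^ β * ((k:ℝ) * (lam * s ^ (-α)) ^ k *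
          (Real.log s + (γ - 1) * digamma (α*k+β)) / Real.Gamma (α*k+β) ^ (γ - 1))) :=
        tsum_congr hval
    _ = -((1 / s ^ β) * ∑' k : ℕ, (k : ℝ) * (lam * s ^ (-α)) ^ k *
            (Real.log s + (γ - 1) * digamma (α * k + β)) /
              Real.Gamma (α * k + β) ^ (γ - 1)) := by
        rw [tsum_neg, tsum_mul_left]
end

section
/- Let α > 0, β > 0 with α + β > 1, let λ ∈ ℝ, and let t > 0. Then ∑_{k=0}^∞ k · λ^k · t^{αk+β−1} · (ln t − ψ(αk+β)) / Γ(αk+β) = λ · ∫₀^t (ln(t − t₁) + γ₀) · t₁^{α+β−2} · (∑_{k=0}^∞ (k+1) · (λ t₁^α)^k / Γ(αk + α + β − 1)) dt₁; that is, the term-by-term derivative with respect to α of t^{β−1} E_{α,β}(λ t^α) equals the convolution λ · ∫₀^t (ln(t−t₁) + γ₀) · t₁^{α+β−2} · E²_{α,α+β−1}(λ t₁^α) dt₁. -/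
open Real MeasureTheory
open Set Filter Topology

local notation "γ₀" => Real.eulerMascheroniConstant

lemma ne_neg_nat {x : ℝ} (hx : 0 < x) : ∀ m : ℕ, x ≠ -m := by
  intro m
  have : -(m:ℝ) ≤ 0 := neg_nonpos.mpr (Nat.cast_nonneg m)
  intro h
  rw [h] at hx
  linarith

lemma diff_logGamma {x : ℝ} (hx : 0 < x) :
    DifferentiableAt ℝ (fun y : ℝ => Real.log (Real.Gamma y)) x :=
  (Real.differentiableAt_Gamma (ne_neg_nat hx)).log (Real.Gamma_ne_zero (ne_neg_nat hx))

lemma digamma_one : digamma 1 = -γ₀ := by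
  unfold digamma
  rw [deriv.log (Real.differentiableAt_Gamma (ne_neg_nat one_pos))
    (Real.Gamma_ne_zero (ne_neg_nat one_pos)), Real.Gamma_one, div_one,
    Real.eulerMascheroniConstant_eq_neg_deriv, neg_neg]

lemma digamma_add_one {x : ℝ} (hx : 0 < x) : digamma (x + 1) = digamma x + 1 / x := by
  unfold digamma
  rw [← deriv_comp_add_const (fun y : ℝ => Real.log (Real.Gamma y)) 1 x]
  have hev : (fun y : ℝ => Real.log (Real.Gamma (y + 1)))
      =ᶠ[nhds x] fun y : ℝ => Real.log (Real.Gamma y) + Real.log y := by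
    filter_upwards [eventually_gt_nhds hx] with y hy
    rw [Real.Gamma_add_one hy.ne', Real.log_mul hy.ne' (Real.Gamma_pos_of_pos hy).ne', add_comm]
  rw [hev.deriv_eq, deriv_fun_add (diff_logGamma hx) (Real.differentiableAt_log hx.ne'),
    Real.deriv_log, one_div]

lemma digamma_mono {a b : ℝ} (ha : 0 < a) (hab : a ≤ b) : digamma a ≤ digamma b := by
  rcases eq_or_lt_of_le hab with rfl | h
  · exact le_refl _
  have hb : 0 < b := ha.trans h
  have hc := Real.convexOn_log_Gamma
  have hda : DifferentiableAt ℝ (Real.log ∘ Real.Gamma) a := diff_logGamma ha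
  have hdb : DifferentiableAt ℝ (Real.log ∘ Real.Gamma) b := diff_logGamma hb
  have h1 := hc.deriv_le_slope (Set.mem_Ioi.mpr ha) (Set.mem_Ioi.mpr hb) h hda
  have h2 := hc.slope_le_deriv (Set.mem_Ioi.mpr ha) (Set.mem_Ioi.mpr hb) h hdb
  have e : digamma a = deriv (Real.log ∘ Real.Gamma) a := rfl
  have e' : digamma b = deriv (Real.log ∘ Real.Gamma) b := rfl
  rw [e, e']
  linarith

lemma digamma_add_nat {x : ℝ} (hx : 0 < x) (n : ℕ) :
    digamma (x + n) = digamma x + ∑ i ∈ Finset.range n, 1 / (x + i) := by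
  induction n with
  | zero => simp
  | succ n ih =>
    have hxn : 0 < x + n := by positivity
    have : x + (n + 1 : ℕ) = (x + n) + 1 := by push_cast; ring
    rw [this, digamma_add_one hxn, ih, Finset.sum_range_succ, add_assoc]


lemma hasSum_digamma {μ : ℝ} (hμ : 0 < μ) :
    HasSum (fun n : ℕ => 1 / ((n + 1) * (n + 1 + μ)))
      ((γ₀ + digamma (μ + 1)) / μ) := by
  set L := (γ₀ + digamma (μ + 1)) / μ with hL
  set S : ℕ → ℝ := fun N => ∑ n ∈ Finset.range N, 1 / ((n + 1 : ℝ) * (n + 1 + μ)) with hS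
  have hterm : ∀ n : ℕ, 1 / ((n + 1 : ℝ) * (n + 1 + μ)) =
      (1 / (1 + (n : ℝ)) - 1 / (μ + 1 + n)) / μ := by
    intro n
    have h1 : (0:ℝ) < (n:ℝ) + 1 := by positivity
    have h2 : (0:ℝ) < (n:ℝ) + 1 + μ := by positivity
    field_simp
    ring
  have key : ∀ N : ℕ, S N = L + (digamma (1 + N) - digamma (μ + 1 + N)) / μ := by
    intro N
    have e1 : ∑ i ∈ Finset.range N, 1 / (1 + (i : ℝ)) = digamma (1 + N) + γ₀ := by
      have := digamma_add_nat (x := 1) one_pos N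
      rw [digamma_one] at this
      rw [this]; ring
    have e2 : ∑ i ∈ Finset.range N, 1 / (μ + 1 + (i : ℝ)) =
        digamma (μ + 1 + N) - digamma (μ + 1) := by
      have := digamma_add_nat (x := μ + 1) (by positivity) N
      rw [this]; ring
    rw [hS]
    simp only [hterm]
    rw [← Finset.sum_div, Finset.sum_sub_distrib, e1, e2, hL]
    ring
  -- the difference tends to zero
  have hdiff : Tendsto (fun N : ℕ => (digamma (1 + N) - digamma (μ + 1 + N)) / μ)
      atTop (nhds 0) := by
    set m := Nat.ceil μ with hm
    have hbound : ∀ N : ℕ, 0 ≤ digamma (μ + 1 + N) - digamma (1 + N) ∧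
        digamma (μ + 1 + N) - digamma (1 + N) ≤ m / (N + 1) := by
      intro N
      have hN1 : (0:ℝ) < 1 + N := by positivity
      constructor
      · have := digamma_mono hN1 (by linarith : (1:ℝ) + N ≤ μ + 1 + N)
        linarith
      · have hμm : μ ≤ (m : ℝ) := Nat.le_ceil μ
        have h1 : digamma (μ + 1 + N) ≤ digamma (1 + (N + m : ℕ)) := by
          apply digamma_mono (by positivity)
          push_cast
          linarith
        have h2 : digamma (1 + (N + m : ℕ)) - digamma (1 + N) ≤ m / (N + 1) := by
          rw [digamma_add_nat one_pos (N + m), digamma_add_nat one_pos N]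
          rw [Finset.sum_range_add]
          have : ∑ i ∈ Finset.range m, 1 / (1 + ((N + i : ℕ) : ℝ)) ≤
              ∑ _i ∈ Finset.range m, 1 / ((N : ℝ) + 1) := by
            apply Finset.sum_le_sum
            intro i _
            apply one_div_le_one_div_of_le (by positivity)
            push_cast
            linarith
          rw [Finset.sum_const, Finset.card_range] at this
          simp only [nsmul_eq_mul] at this
          have e : (m : ℝ) * (1 / ((N:ℝ) + 1)) = m / (N + 1) := by ring
          rw [e] at this
          linarith
        linarith [digamma_mono hN1 (by push_cast; linarith [Nat.le_ceil μ] :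
          (1:ℝ) + N ≤ 1 + ((N + m : ℕ) : ℝ))]
    have hzero : Tendsto (fun N : ℕ => (m : ℝ) / (N + 1)) atTop (nhds 0) := by
      have := tendsto_const_div_atTop_nhds_zero_nat (m : ℝ)
      have h2 := this.comp (tendsto_add_atTop_nat 1)
      refine h2.congr fun N => ?_
      show (m : ℝ) / (((N + 1 : ℕ) : ℝ)) = (m : ℝ) / ((N : ℝ) + 1)
      push_cast
      ring
    have h0 : Tendsto (fun N : ℕ => digamma (μ + 1 + N) - digamma (1 + N)) atTop (nhds 0) :=
      squeeze_zero (fun N => (hbound N).1) (fun N => (hbound N).2) hzero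
    have : Tendsto (fun N : ℕ => -(digamma (μ + 1 + N) - digamma (1 + N)) / μ)
        atTop (nhds (-0 / μ)) := (h0.neg).div_const μ
    simpa using this.congr (fun N => by ring)
  have hT : Tendsto S atTop (nhds L) := by
    have := hdiff.const_add L
    rw [add_zero] at this
    exact this.congr (fun N => (key N).symm)
  -- summability
  have hnn : ∀ n : ℕ, 0 ≤ 1 / ((n + 1 : ℝ) * (n + 1 + μ)) := by
    intro n; positivity
  have hmonoS : Monotone S := by
    apply monotone_nat_of_le_succ
    intro n
    rw [hS]
    simp only [Finset.sum_range_succ]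
    have := hnn n
    linarith
  have hsummable : Summable (fun n : ℕ => 1 / ((n + 1 : ℝ) * (n + 1 + μ))) := by
    apply summable_of_sum_range_le hnn
    intro N
    exact hmonoS.ge_of_tendsto hT N
  have heq : ∑' n : ℕ, 1 / ((n + 1 : ℝ) * (n + 1 + μ)) = L :=
    tendsto_nhds_unique (hsummable.hasSum.tendsto_sum_nat) hT
  exact heq ▸ hsummable.hasSum

lemma gamma_conv {a y : ℝ} (ha0 : 0 < a) (ha1 : a ≤ 1) (hy : 1 ≤ y) :
    y * Real.Gamma y ≤ Real.Gamma (y + a) * (y + a) ^ (1 - a) := by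
  have hy0 : (0:ℝ) < y := lt_of_lt_of_le one_pos hy
  have hya : (0:ℝ) < y + a := by linarith
  rcases eq_or_lt_of_le ha1 with rfl | ha1'
  · rw [Real.Gamma_add_one hy0.ne']
    simp [Real.rpow_zero]
  -- 0 < a < 1
  have hc := Real.convexOn_log_Gamma
  have hkey := hc.2 (Set.mem_Ioi.mpr hya) (Set.mem_Ioi.mpr (by linarith : (0:ℝ) < y + a + 1))
    (le_of_lt ha0) (by linarith : (0:ℝ) ≤ 1 - a) (by ring)
  have hpt : a • (y + a) + (1 - a) • (y + a + 1) = y + 1 := by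
    simp only [smul_eq_mul]; ring
  rw [hpt] at hkey
  simp only [Function.comp_apply, smul_eq_mul] at hkey
  have hGya : 0 < Real.Gamma (y + a) := Real.Gamma_pos_of_pos hya
  have hGy : 0 < Real.Gamma y := Real.Gamma_pos_of_pos hy0
  have e1 : Real.Gamma (y + a + 1) = (y + a) * Real.Gamma (y + a) :=
    Real.Gamma_add_one hya.ne'
  have e2 : Real.Gamma (y + 1) = y * Real.Gamma y := Real.Gamma_add_one hy0.ne'
  rw [e1, e2, Real.log_mul hy0.ne' hGy.ne', Real.log_mul hya.ne' hGya.ne'] at hkey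
  -- hkey : log y + log Γ y ≤ a * log Γ(y+a) + (1-a) * (log (y+a) + log Γ(y+a))
  have hlog : Real.log (y * Real.Gamma y) ≤
      Real.log (Real.Gamma (y + a) * (y + a) ^ (1 - a)) := by
    rw [Real.log_mul hy0.ne' hGy.ne',
      Real.log_mul hGya.ne' (Real.rpow_pos_of_pos hya _).ne', Real.log_rpow hya]
    nlinarith [hkey]
  have := Real.exp_le_exp.mpr hlog
  rwa [Real.exp_log (by positivity), Real.exp_log (by positivity)] at this

lemma gamma_pow_le (n : ℕ) : ∀ a y : ℝ, (n : ℝ) ≤ a → a < n + 1 → 1 ≤ y →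
    y ^ n * (y / (y + 1)) * Real.Gamma y ≤ Real.Gamma (y + a) := by
  induction n with
  | zero =>
    intro a y hna han hy
    have hy0 : (0:ℝ) < y := lt_of_lt_of_le one_pos hy
    have hGy : 0 < Real.Gamma y := Real.Gamma_pos_of_pos hy0
    simp only [Nat.cast_zero, pow_zero, one_mul] at *
    rcases eq_or_lt_of_le hna with h0 | ha0
    · rw [← h0, add_zero]
      have : y / (y + 1) ≤ 1 := by
        rw [div_le_one (by linarith)]; linarith
      nlinarith
    · have h1 := gamma_conv ha0 (by linarith) hy
      have hya : (0:ℝ) < y + a := by linarith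
      have hGya : 0 < Real.Gamma (y + a) := Real.Gamma_pos_of_pos hya
      have h2 : (y + a) ^ (1 - a) ≤ y + 1 := by
        calc (y + a) ^ (1 - a) ≤ (y + 1) ^ (1 - a) :=
              Real.rpow_le_rpow hya.le (by linarith) (by linarith)
          _ ≤ (y + 1) ^ (1:ℝ) :=
              Real.rpow_le_rpow_of_exponent_le (by linarith) (by linarith)
          _ = y + 1 := Real.rpow_one _
      rw [div_mul_eq_mul_div, div_le_iff₀ (by linarith : (0:ℝ) < y + 1)]
      calc y * Real.Gamma y ≤ Real.Gamma (y + a) * (y + a) ^ (1 - a) := h1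
        _ ≤ Real.Gamma (y + a) * (y + 1) := by nlinarith [Real.rpow_pos_of_pos hya (1-a)]
  | succ n ih =>
    intro a y hna han hy
    have hy0 : (0:ℝ) < y := lt_of_lt_of_le one_pos hy
    have ha1 : 1 ≤ a := by
      have h0 : (0:ℝ) ≤ (n:ℝ) := Nat.cast_nonneg n
      push_cast at hna
      linarith
    have hprev : y ^ n * (y / (y + 1)) * Real.Gamma y ≤ Real.Gamma (y + (a - 1)) := by
      apply ih (a - 1) y (by push_cast at hna ⊢; linarith) (by push_cast at han ⊢; linarith) hy
    have hya1 : (0:ℝ) < y + (a - 1) := by linarith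
    have e : Real.Gamma (y + a) = (y + (a - 1)) * Real.Gamma (y + (a - 1)) := by
      have : y + a = (y + (a - 1)) + 1 := by ring
      rw [this, Real.Gamma_add_one hya1.ne']
    rw [e, pow_succ]
    have hGya1 : 0 < Real.Gamma (y + (a - 1)) := Real.Gamma_pos_of_pos hya1
    have h3 : y ≤ y + (a - 1) := by linarith
    have hnn : 0 ≤ y ^ n * (y / (y + 1)) * Real.Gamma y := by positivity
    calc y ^ n * y * (y / (y + 1)) * Real.Gamma y
        = y * (y ^ n * (y / (y + 1)) * Real.Gamma y) := by ring
      _ ≤ y * Real.Gamma (y + (a - 1)) := by nlinarith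
      _ ≤ (y + (a - 1)) * Real.Gamma (y + (a - 1)) := by nlinarith

lemma tendsto_gamma_ratio {a : ℝ} (ha : 0 < a) :
    Tendsto (fun y => Real.Gamma y / Real.Gamma (y + a)) atTop (nhds 0) := by
  rcases le_or_gt a 1 with ha1 | ha1
  · apply squeeze_zero' (g := fun y => 2 * (y + 1) ^ (-a))
    · filter_upwards [eventually_ge_atTop (1:ℝ)] with y hy
      have hy0 : (0:ℝ) < y := lt_of_lt_of_le one_pos hy
      positivity
    · filter_upwards [eventually_ge_atTop (1:ℝ)] with y hy
      have hy0 : (0:ℝ) < y := lt_of_lt_of_le one_pos hy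
      have hya : (0:ℝ) < y + a := by linarith
      have h1 := gamma_conv ha ha1 hy
      have hGya : 0 < Real.Gamma (y + a) := Real.Gamma_pos_of_pos hya
      have hGy : 0 < Real.Gamma y := Real.Gamma_pos_of_pos hy0
      have h2 : Real.Gamma y / Real.Gamma (y + a) ≤ (y + a) ^ (1 - a) / y := by
        rw [div_le_div_iff₀ hGya (by linarith)]
        nlinarith
      have h3 : (y + a) ^ (1 - a) ≤ (y + 1) ^ (1 - a) :=
        Real.rpow_le_rpow hya.le (by linarith) (by linarith)
      have h4 : (y + 1) ^ (1 - a) / y ≤ 2 * (y + 1) ^ (-a) := by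
        have e : (y + 1 : ℝ) ^ (1 - a) = (y + 1) * (y + 1) ^ (-a) := by
          rw [show (1 - a) = 1 + (-a) by ring,
            Real.rpow_add (by linarith : (0:ℝ) < y + 1), Real.rpow_one]
        rw [e, div_le_iff₀ hy0]
        have hp : 0 < (y + 1 : ℝ) ^ (-a) := Real.rpow_pos_of_pos (by linarith) _
        nlinarith
      calc Real.Gamma y / Real.Gamma (y + a) ≤ (y + a) ^ (1 - a) / y := h2
        _ ≤ (y + 1) ^ (1 - a) / y := by gcongr
        _ ≤ 2 * (y + 1) ^ (-a) := h4
    · have h5 : Tendsto (fun y : ℝ => (y + 1) ^ (-a)) atTop (nhds 0) :=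
        (tendsto_rpow_neg_atTop ha).comp (tendsto_atTop_add_const_right _ 1 tendsto_id)
      simpa using h5.const_mul 2
  · -- a > 1
    set n := Nat.floor a with hn
    have hn1 : 1 ≤ n := Nat.le_floor (by exact_mod_cast ha1.le)
    have hna : (n : ℝ) ≤ a := Nat.floor_le ha.le
    have han : a < n + 1 := Nat.lt_floor_add_one a
    apply squeeze_zero' (g := fun y => 2 / y)
    · filter_upwards [eventually_ge_atTop (1:ℝ)] with y hy
      have hy0 : (0:ℝ) < y := lt_of_lt_of_le one_pos hy
      have hya : (0:ℝ) < y + a := by linarith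
      positivity
    · filter_upwards [eventually_ge_atTop (1:ℝ)] with y hy
      have hy0 : (0:ℝ) < y := lt_of_lt_of_le one_pos hy
      have hya : (0:ℝ) < y + a := by linarith
      have hGya : 0 < Real.Gamma (y + a) := Real.Gamma_pos_of_pos hya
      have hGy : 0 < Real.Gamma y := Real.Gamma_pos_of_pos hy0
      have h1 := gamma_pow_le n a y hna han hy
      have hpow : y ≤ y ^ n := by
        calc y = y ^ 1 := (pow_one y).symm
          _ ≤ y ^ n := pow_le_pow_right₀ hy hn1
      have h2 : y * (y / (y + 1)) * Real.Gamma y ≤ Real.Gamma (y + a) := by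
        have hnn : 0 ≤ (y / (y + 1)) * Real.Gamma y := by positivity
        nlinarith
      -- so ratio ≤ (y+1)/y^2 ≤ 2/y
      rw [div_le_div_iff₀ hGya hy0]
      have hkey : y * y * (y / (y+1)) * Real.Gamma y ≤ y * Real.Gamma (y + a) := by nlinarith
      have hq : 1 ≤ 2 * (y / (y + 1)) := by
        rw [mul_div_assoc', le_div_iff₀ (by linarith : (0:ℝ) < y + 1)]
        linarith
      have h6 := mul_le_mul_of_nonneg_right hq
        (show (0:ℝ) ≤ y * Real.Gamma y by positivity)
      rw [one_mul] at h6
      nlinarith [h2, h6, hGya]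
    · have : Tendsto (fun y : ℝ => 2 * y⁻¹) atTop (nhds 0) := by
        simpa using tendsto_inv_atTop_zero.const_mul (2:ℝ)
      exact this.congr (fun y => by rw [div_eq_mul_inv])

lemma summable_ml {α c : ℝ} (hα : 0 < α) (hc : 0 < c) (x : ℝ) :
    Summable (fun k : ℕ => ((k : ℝ) + 1) * x ^ k / Real.Gamma (α * k + c)) := by
  apply summable_of_ratio_norm_eventually_le (r := 1/2) (by norm_num)
  have htop : Tendsto (fun k : ℕ => α * k + c) atTop atTop := by
    apply tendsto_atTop_add_const_right
    exact Tendsto.const_mul_atTop hα tendsto_natCast_atTop_atTop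
  have hrat : Tendsto (fun k : ℕ =>
      |x| * (Real.Gamma (α * k + c) / Real.Gamma ((α * k + c) + α))) atTop (nhds (|x| * 0)) :=
    ((tendsto_gamma_ratio hα).comp htop).const_mul |x|
  rw [mul_zero] at hrat
  have hev : ∀ᶠ k : ℕ in atTop,
      |x| * (Real.Gamma (α * k + c) / Real.Gamma ((α * k + c) + α)) ≤ 1/4 :=
    hrat.eventually (eventually_le_nhds (by norm_num : (0:ℝ) < 1/4))
  filter_upwards [hev] with k hk
  have hy : (0:ℝ) < α * k + c := by positivity
  have hG1 : 0 < Real.Gamma (α * k + c) := Real.Gamma_pos_of_pos hy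
  have hG2 : 0 < Real.Gamma ((α * k + c) + α) := Real.Gamma_pos_of_pos (by linarith)
  have hxG : |x| * Real.Gamma (α * k + c) ≤ Real.Gamma ((α * k + c) + α) / 4 := by
    calc |x| * Real.Gamma (α * k + c)
        = |x| * (Real.Gamma (α * k + c) / Real.Gamma ((α * k + c) + α)) *
            Real.Gamma ((α * k + c) + α) := by field_simp
      _ ≤ 1/4 * Real.Gamma ((α * k + c) + α) := mul_le_mul_of_nonneg_right hk hG2.le
      _ = Real.Gamma ((α * k + c) + α) / 4 := by ring
  have e2 : α * ((k:ℝ) + 1) + c = (α * k + c) + α := by ring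
  have hnorm : ∀ m : ℕ, ‖((m : ℝ) + 1) * x ^ m / Real.Gamma (α * m + c)‖ =
      ((m : ℝ) + 1) * |x| ^ m / Real.Gamma (α * m + c) := by
    intro m
    have hGm : 0 < Real.Gamma (α * m + c) := Real.Gamma_pos_of_pos (by positivity)
    rw [Real.norm_eq_abs, abs_div, abs_mul, abs_pow, abs_of_pos hGm,
      abs_of_pos (by positivity : (0:ℝ) < (m:ℝ) + 1)]
  rw [hnorm, hnorm]
  push_cast
  rw [e2, ← mul_div_assoc]
  rw [div_le_div_iff₀ hG2 hG1]
  have hk2 : ((k:ℝ) + 1 + 1) ≤ 2 * ((k:ℝ) + 1) := by push_cast; linarith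
  have hxp : (0:ℝ) ≤ |x| ^ k := by positivity
  have step1 : ((k:ℝ) + 1 + 1) * |x| ^ (k + 1) * Real.Gamma (α * k + c)
      = ((k:ℝ) + 1 + 1) * |x| ^ k * (|x| * Real.Gamma (α * k + c)) := by ring
  rw [step1]
  calc ((k:ℝ) + 1 + 1) * |x| ^ k * (|x| * Real.Gamma (α * k + c))
      ≤ ((k:ℝ) + 1 + 1) * |x| ^ k * (Real.Gamma ((α * k + c) + α) / 4) := by
        apply mul_le_mul_of_nonneg_left hxG (by positivity)
    _ ≤ (2 * ((k:ℝ) + 1)) * |x| ^ k * (Real.Gamma ((α * k + c) + α) / 4) := by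
        have h4 : (0:ℝ) ≤ Real.Gamma ((α * k + c) + α) / 4 := by positivity
        apply mul_le_mul_of_nonneg_right _ h4
        apply mul_le_mul_of_nonneg_right hk2 hxp
    _ = 1 / 2 * (((k:ℝ) + 1) * |x| ^ k) * Real.Gamma ((α * k + c) + α) := by ring

lemma integrableOn_log_Ioo {t : ℝ} (ht : 0 < t) :
    IntegrableOn Real.log (Ioo 0 t) volume := by
  have part1 : IntegrableOn Real.log (Ioc (0:ℝ) 1) volume := by
    have h : IntegrableOn (fun x : ℝ => -Real.log x) (Ioc (0:ℝ) 1) volume := by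
      apply intervalIntegral.integrableOn_deriv_of_nonneg (g := fun x : ℝ => x - x * Real.log x)
      · exact (continuous_id.sub Real.continuous_mul_log).continuousOn
      · intro x hx
        have h1 : HasDerivAt (fun x : ℝ => x - x * Real.log x) (1 - (Real.log x + 1)) x :=
          (hasDerivAt_id x).sub (Real.hasDerivAt_mul_log hx.1.ne')
        convert h1 using 1
        ring
      · intro x hx
        simp only [neg_nonneg]
        exact Real.log_nonpos hx.1.le hx.2.le
    exact h.neg.congr (ae_of_all _ fun x => by simp)
  rcases le_or_gt t 1 with h | h
  · exact part1.mono_set (fun x hx => ⟨hx.1, hx.2.le.trans h⟩)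
  · have part2 : IntegrableOn Real.log (Icc (1:ℝ) t) volume := by
      apply ContinuousOn.integrableOn_Icc
      apply Real.continuousOn_log.mono
      intro x hx
      simp only [mem_compl_iff, mem_singleton_iff]
      intro h0
      rw [h0] at hx
      exact absurd hx.1 (by norm_num)
    apply (part1.union part2).mono_set
    intro x hx
    rcases le_or_gt x 1 with h1 | h1
    · exact Or.inl ⟨hx.1, h1⟩
    · exact Or.inr ⟨h1.le, hx.2.le⟩

lemma intervalIntegrable_log' {t : ℝ} (ht : 0 < t) :
    IntervalIntegrable Real.log volume 0 t := by
  rw [intervalIntegrable_iff, uIoc_of_le ht.le, integrableOn_Ioc_iff_integrableOn_Ioo]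
  exact integrableOn_log_Ioo ht

lemma integrableOn_log_sub {t : ℝ} (ht : 0 < t) :
    IntegrableOn (fun s : ℝ => Real.log (t - s)) (Ioo 0 t) volume := by
  have h2 := (intervalIntegrable_log' ht).comp_sub_left t
  simp only [sub_zero, sub_self] at h2
  have h3 := h2.symm
  rw [intervalIntegrable_iff, uIoc_of_le ht.le, integrableOn_Ioc_iff_integrableOn_Ioo] at h3
  exact h3

lemma integrableOn_rpow_Ioo {t ν : ℝ} (ht : 0 < t) (hν : -1 < ν) :
    IntegrableOn (fun s : ℝ => s ^ ν) (Ioo 0 t) volume := by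
  have h := intervalIntegral.intervalIntegrable_rpow' (a := 0) (b := t) hν
  rwa [intervalIntegrable_iff, uIoc_of_le ht.le, integrableOn_Ioc_iff_integrableOn_Ioo] at h

lemma integrableOn_logker {t ν : ℝ} (ht : 0 < t) (hν : -1 < ν) :
    IntegrableOn (fun s : ℝ => (Real.log (t - s) + γ₀) * s ^ ν) (Ioo 0 t) volume := by
  have hrpow := integrableOn_rpow_Ioo ht hν
  have hmain : IntegrableOn (fun s : ℝ => Real.log (t - s) * s ^ ν) (Ioo 0 t) volume := by
    set M : ℝ := |Real.log (t/2)| + |Real.log t| with hM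
    set C : ℝ := (t/2) ^ ν + t ^ ν with hC
    have hM0 : 0 ≤ M := by positivity
    have hC0 : 0 ≤ C := by positivity
    apply Integrable.mono' (g := fun s => M * s ^ ν + C * |Real.log (t - s)|)
    · exact (hrpow.const_mul M).add (((integrableOn_log_sub ht).norm).const_mul C)
    · apply ContinuousOn.aestronglyMeasurable ?_ measurableSet_Ioo
      apply ContinuousOn.mul
      · apply Real.continuousOn_log.comp (continuous_const.sub continuous_id).continuousOn
        intro s hs
        simp only [mem_compl_iff, mem_singleton_iff]
        intro h0
        have : t - s = 0 := h0
        have := hs.2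
        linarith [hs.2]
      · intro s hs
        exact (Real.continuousAt_rpow_const s ν (Or.inl hs.1.ne')).continuousWithinAt
    · filter_upwards [ae_restrict_mem measurableSet_Ioo] with s hs
      have hs0 : (0:ℝ) < s := hs.1
      have hst : s < t := hs.2
      have hts : (0:ℝ) < t - s := by linarith
      have habs : ‖Real.log (t - s) * s ^ ν‖ = |Real.log (t - s)| * s ^ ν := by
        rw [Real.norm_eq_abs, abs_mul, abs_of_pos (Real.rpow_pos_of_pos hs0 ν)]
      rw [habs]
      rcases le_or_gt s (t/2) with hhalf | hhalf
      · have hlb : Real.log (t/2) ≤ Real.log (t - s) :=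
          Real.log_le_log (by positivity) (by linarith)
        have hub : Real.log (t - s) ≤ Real.log t := Real.log_le_log hts (by linarith)
        have : |Real.log (t - s)| ≤ M := by
          rw [abs_le]
          constructor
          · have := neg_abs_le (Real.log (t/2))
            rw [hM]
            have h2 := abs_nonneg (Real.log t)
            linarith
          · have := le_abs_self (Real.log t)
            rw [hM]
            have h2 := abs_nonneg (Real.log (t/2))
            linarith
        have h1 : |Real.log (t - s)| * s ^ ν ≤ M * s ^ ν :=
          mul_le_mul_of_nonneg_right this (Real.rpow_pos_of_pos hs0 ν).le
        have h2 : 0 ≤ C * |Real.log (t - s)| := by positivity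
        linarith
      · have hsC : s ^ ν ≤ C := by
          rcases le_or_gt 0 ν with hν0 | hν0
          · have : s ^ ν ≤ t ^ ν := Real.rpow_le_rpow hs0.le hst.le hν0
            have h2 : (0:ℝ) ≤ (t/2) ^ ν := by positivity
            rw [hC]; linarith
          · have : s ^ ν ≤ (t/2) ^ ν :=
              Real.rpow_le_rpow_of_nonpos (by positivity) hhalf.le hν0.le
            have h2 : (0:ℝ) ≤ t ^ ν := by positivity
            rw [hC]; linarith
        have h1 : |Real.log (t - s)| * s ^ ν ≤ C * |Real.log (t - s)| := by
          rw [mul_comm]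
          exact mul_le_mul_of_nonneg_right hsC (abs_nonneg _)
        have h2 : 0 ≤ M * s ^ ν := by positivity
        linarith
  have : IntegrableOn (fun s : ℝ => Real.log (t - s) * s ^ ν + γ₀ * s ^ ν) (Ioo 0 t) volume :=
    hmain.add (hrpow.const_mul γ₀)
  exact IntegrableOn.congr_fun this (fun s _ => by ring) measurableSet_Ioo

lemma integrableOn_logker_abs {t ν : ℝ} (ht : 0 < t) (hν : -1 < ν) :
    IntegrableOn (fun s : ℝ => |Real.log (t - s) + γ₀| * s ^ ν) (Ioo 0 t) volume := by
  have h := (integrableOn_logker ht hν).norm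
  apply IntegrableOn.congr_fun h ?_ measurableSet_Ioo
  intro s hs
  show ‖(Real.log (t - s) + γ₀) * s ^ ν‖ = |Real.log (t - s) + γ₀| * s ^ ν
  rw [Real.norm_eq_abs, abs_mul, abs_of_pos (Real.rpow_pos_of_pos hs.1 ν)]

lemma integral_Ioo_rpow {b : ℝ} (hb : -1 < b) :
    ∫ u in Ioo (0:ℝ) 1, u ^ b = 1 / (b + 1) := by
  rw [← integral_Ioc_eq_integral_Ioo, ← intervalIntegral.integral_of_le zero_le_one,
    integral_rpow (Or.inl hb), Real.one_rpow, Real.zero_rpow (by linarith)]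
  ring

lemma integral_rpow_mul_log {μ : ℝ} (hμ : 0 < μ) :
    ∫ u in Ioo (0:ℝ) 1, u ^ (μ - 1) * Real.log (1 - u)
      = -((γ₀ + digamma (μ + 1)) / μ) := by
  set F : ℕ → ℝ → ℝ := fun n u => -(u ^ (μ + n) / (n + 1)) with hF
  have h_int : ∀ n : ℕ, Integrable (F n) (volume.restrict (Ioo (0:ℝ) 1)) := by
    intro n
    have : IntegrableOn (fun u : ℝ => u ^ (μ + n)) (Ioo (0:ℝ) 1) volume :=
      integrableOn_rpow_Ioo one_pos (by have := Nat.cast_nonneg (α := ℝ) n; linarith)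
    exact (this.div_const _).neg
  have h_val : ∀ n : ℕ, ∫ u in Ioo (0:ℝ) 1, F n u = -(1 / ((μ + n + 1) * (n + 1))) := by
    intro n
    rw [hF]
    simp only [integral_neg, integral_div]
    rw [integral_Ioo_rpow (by have := Nat.cast_nonneg (α := ℝ) n; linarith), div_div]
  have h_norm : ∀ n : ℕ, ∫ u in Ioo (0:ℝ) 1, ‖F n u‖ = 1 / ((μ + n + 1) * (n + 1)) := by
    intro n
    have heq : ∫ u in Ioo (0:ℝ) 1, ‖F n u‖ = ∫ u in Ioo (0:ℝ) 1, u ^ (μ + n) / (n + 1) := by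
      apply setIntegral_congr_fun measurableSet_Ioo
      intro u hu
      show ‖-(u ^ (μ + n) / ((n:ℝ) + 1))‖ = u ^ (μ + n) / ((n:ℝ) + 1)
      rw [norm_neg, Real.norm_eq_abs, abs_of_pos]
      have := Real.rpow_pos_of_pos hu.1 (μ + n)
      positivity
    rw [heq, integral_div,
      integral_Ioo_rpow (by have := Nat.cast_nonneg (α := ℝ) n; linarith), div_div]
  have h_sum : Summable fun n : ℕ => ∫ u in Ioo (0:ℝ) 1, ‖F n u‖ := by
    simp only [h_norm]
    have hs2 : Summable (fun n : ℕ => 1 / ((n:ℝ) + 1) ^ 2) := by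
      have h := summable_one_div_nat_pow.mpr (le_refl 2)
      rw [← summable_nat_add_iff 1] at h
      exact h.congr (fun n => by push_cast; ring)
    apply Summable.of_nonneg_of_le (fun n => by positivity) ?_ hs2
    intro n
    apply one_div_le_one_div_of_le (by positivity)
    have h0 : (0:ℝ) ≤ (n:ℝ) := Nat.cast_nonneg n
    nlinarith
  have hswap := MeasureTheory.integral_tsum_of_summable_integral_norm h_int h_sum
  have hpt : ∀ u ∈ Ioo (0:ℝ) 1, (∑' n : ℕ, F n u) = u ^ (μ - 1) * Real.log (1 - u) := by
    intro u hu
    have hu0 : (0:ℝ) < u := hu.1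
    have hu1 : u < 1 := hu.2
    have h := Real.hasSum_pow_div_log_of_abs_lt_one
      (x := u) (by rw [abs_of_pos hu0]; exact hu1)
    have h2 := h.mul_left (-(u ^ (μ - 1)))
    have hterm : (fun n : ℕ => -(u ^ (μ - 1)) * (u ^ (n + 1) / ((n:ℝ) + 1)))
        = fun n : ℕ => F n u := by
      funext n
      rw [hF, neg_mul, mul_div_assoc']
      congr 2
      rw [← Real.rpow_natCast u (n + 1), ← Real.rpow_add hu0]
      congr 1
      push_cast
      ring
    rw [hterm] at h2
    have hval : -(u ^ (μ - 1)) * -Real.log (1 - u) = u ^ (μ - 1) * Real.log (1 - u) := by ring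
    rw [hval] at h2
    exact h2.tsum_eq
  calc ∫ u in Ioo (0:ℝ) 1, u ^ (μ - 1) * Real.log (1 - u)
      = ∫ u in Ioo (0:ℝ) 1, ∑' n : ℕ, F n u :=
        (setIntegral_congr_fun measurableSet_Ioo (fun u hu => (hpt u hu).symm))
    _ = ∑' n : ℕ, ∫ u in Ioo (0:ℝ) 1, F n u := hswap.symm
    _ = ∑' n : ℕ, -(1 / (((n:ℝ) + 1) * ((n:ℝ) + 1 + μ))) := by
        apply tsum_congr
        intro n
        rw [h_val n]
        congr 1
        rw [div_eq_div_iff] <;> try ring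
        · positivity
        · positivity
    _ = -∑' n : ℕ, 1 / (((n:ℝ) + 1) * ((n:ℝ) + 1 + μ)) := tsum_neg
    _ = -((γ₀ + digamma (μ + 1)) / μ) := by rw [(hasSum_digamma hμ).tsum_eq]

lemma key_integral {μ t : ℝ} (hμ : 0 < μ) (ht : 0 < t) :
    ∫ s in Ioo (0:ℝ) t, (Real.log (t - s) + γ₀) * s ^ (μ - 1)
      = t ^ μ / μ * (Real.log t - digamma (μ + 1)) := by
  set f : ℝ → ℝ := fun s => (Real.log (t - s) + γ₀) * s ^ (μ - 1) with hf
  have step1 : ∫ s in Ioo (0:ℝ) t, f s = ∫ s in (0:ℝ)..t, f s := by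
    rw [intervalIntegral.integral_of_le ht.le, integral_Ioc_eq_integral_Ioo]
  have step2 : ∫ s in (0:ℝ)..t, f s = t * ∫ u in (0:ℝ)..1, f (t * u) := by
    rw [intervalIntegral.integral_comp_mul_left f ht.ne']
    rw [mul_zero, mul_one, smul_eq_mul, ← mul_assoc, mul_inv_cancel₀ ht.ne', one_mul]
  set A : ℝ := (Real.log t + γ₀) * t ^ (μ - 1) with hA
  set B : ℝ := t ^ (μ - 1) with hB
  have step3 : ∫ u in (0:ℝ)..1, f (t * u)
      = ∫ u in (0:ℝ)..1, (A * u ^ (μ - 1) + B * (u ^ (μ - 1) * Real.log (1 - u))) := by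
    apply intervalIntegral.integral_congr_ae
    have hae : ∀ᵐ u : ℝ, u ≠ (1:ℝ) := by
      refine ae_iff.mpr ?_
      have : {u : ℝ | ¬u ≠ 1} = {1} := by ext u; simp
      rw [this]
      exact measure_singleton 1
    filter_upwards [hae] with u hu1 hmem
    rw [uIoc_of_le zero_le_one] at hmem
    have hu0 : (0:ℝ) < u := hmem.1
    have hu2 : u < 1 := lt_of_le_of_ne hmem.2 hu1
    have h1u : (0:ℝ) < 1 - u := by linarith
    rw [hf]
    have e1 : t - t * u = t * (1 - u) := by ring
    have e2 : Real.log (t * (1 - u)) = Real.log t + Real.log (1 - u) :=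
      Real.log_mul ht.ne' h1u.ne'
    have e3 : (t * u) ^ (μ - 1) = t ^ (μ - 1) * u ^ (μ - 1) :=
      Real.mul_rpow ht.le hu0.le
    show (Real.log (t - t * u) + γ₀) * (t * u) ^ (μ - 1) = _
    rw [e1, e2, e3, hA, hB]
    ring
  have hI1 : IntervalIntegrable (fun u : ℝ => A * u ^ (μ - 1)) volume 0 1 :=
    (intervalIntegral.intervalIntegrable_rpow' (by linarith)).const_mul A
  have hI2' : IntegrableOn (fun u : ℝ => u ^ (μ - 1) * Real.log (1 - u)) (Ioo (0:ℝ) 1) volume := by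
    have h1 := integrableOn_logker (t := 1) (ν := μ - 1) one_pos (by linarith)
    have h2 := (integrableOn_rpow_Ioo (t := 1) (ν := μ - 1) one_pos (by linarith)).const_mul γ₀
    exact IntegrableOn.congr_fun (h1.sub h2)
      (fun u _ => by simp only [Pi.sub_apply]; ring) measurableSet_Ioo
  have hI2 : IntervalIntegrable (fun u : ℝ => B * (u ^ (μ - 1) * Real.log (1 - u))) volume 0 1 := by
    rw [intervalIntegrable_iff, uIoc_of_le zero_le_one,
      integrableOn_Ioc_iff_integrableOn_Ioo]
    exact hI2'.const_mul B
  have step4 : ∫ u in (0:ℝ)..1, (A * u ^ (μ - 1) + B * (u ^ (μ - 1) * Real.log (1 - u)))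
      = A * (1 / μ) + B * (-((γ₀ + digamma (μ + 1)) / μ)) := by
    rw [intervalIntegral.integral_add hI1 hI2, intervalIntegral.integral_const_mul,
      intervalIntegral.integral_const_mul]
    congr 1
    · congr 1
      rw [intervalIntegral.integral_of_le zero_le_one, integral_Ioc_eq_integral_Ioo,
        integral_Ioo_rpow (by linarith)]
      congr 1
      ring
    · congr 1
      rw [intervalIntegral.integral_of_le zero_le_one, integral_Ioc_eq_integral_Ioo]
      exact integral_rpow_mul_log hμ
  rw [step1, step2, step3, step4, hA, hB]
  have htμ : t * t ^ (μ - 1) = t ^ μ := by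
    nth_rewrite 1 [← Real.rpow_one t]
    rw [← Real.rpow_add ht]
    norm_num
  linear_combination ((Real.log t - digamma (μ + 1)) / μ) * htμ

theorem deriv_alpha_ML_convolution (α β lam t : ℝ) (hα : 0 < α) (hβ : 0 < β)
    (hαβ : 1 < α + β) (ht : 0 < t) :
    (∑' k : ℕ, (k : ℝ) * lam ^ k * t ^ (α * k + β - 1) *
        (Real.log t - digamma (α * k + β)) / Real.Gamma (α * k + β))
      = lam * ∫ t₁ in (0 : ℝ)..t,
          (Real.log (t - t₁) + Real.eulerMascheroniConstant) * t₁ ^ (α + β - 2) *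
            ∑' k : ℕ, ((k : ℝ) + 1) * (lam * t₁ ^ α) ^ k /
              Real.Gamma (α * k + α + β - 1) := by
  have hc0 : 0 < α + β - 1 := by linarith
  have hμk : ∀ k : ℕ, 0 < α * k + α + β - 1 := fun k => by
    have := Nat.cast_nonneg (α := ℝ) k; nlinarith
  have hνk : ∀ k : ℕ, (-1:ℝ) < α * k + α + β - 2 := fun k => by
    have := Nat.cast_nonneg (α := ℝ) k; nlinarith
  set F : ℕ → ℝ → ℝ := fun k s =>
    (((k:ℝ) + 1) * lam ^ k / Real.Gamma (α * k + α + β - 1)) *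
      ((Real.log (t - s) + γ₀) * s ^ (α * k + α + β - 2)) with hFdef
  have hFint : ∀ k : ℕ, Integrable (F k) (volume.restrict (Ioo (0:ℝ) t)) := fun k =>
    (integrableOn_logker ht (hνk k)).const_mul _
  have hBint : IntegrableOn (fun s : ℝ => |Real.log (t - s) + γ₀| * s ^ (α + β - 2))
      (Ioo (0:ℝ) t) volume := integrableOn_logker_abs ht (by linarith)
  set B : ℝ := ∫ s in Ioo (0:ℝ) t, |Real.log (t - s) + γ₀| * s ^ (α + β - 2) with hBdef
  have htα : ∀ k : ℕ, (t ^ α) ^ k = t ^ (α * k) := fun k => by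
    rw [← Real.rpow_natCast (t ^ α) k, ← Real.rpow_mul ht.le]
  have hnormbound : ∀ k : ℕ, (∫ s in Ioo (0:ℝ) t, ‖F k s‖) ≤
      (((k:ℝ) + 1) * (|lam| * t ^ α) ^ k / Real.Gamma (α * k + α + β - 1)) * B := by
    intro k
    have hG : 0 < Real.Gamma (α * k + α + β - 1) := Real.Gamma_pos_of_pos (hμk k)
    set D : ℝ := ((k:ℝ) + 1) * |lam| ^ k / Real.Gamma (α * k + α + β - 1) * t ^ (α * k)
      with hDdef
    have hmono : ∀ s ∈ Ioo (0:ℝ) t, ‖F k s‖ ≤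
        D * (|Real.log (t - s) + γ₀| * s ^ (α + β - 2)) := by
      intro s hs
      have hs0 : (0:ℝ) < s := hs.1
      have hC : |((k:ℝ) + 1) * lam ^ k / Real.Gamma (α * k + α + β - 1)| =
          ((k:ℝ) + 1) * |lam| ^ k / Real.Gamma (α * k + α + β - 1) := by
        rw [abs_div, abs_mul, abs_pow, abs_of_pos hG,
          abs_of_pos (by positivity : (0:ℝ) < (k:ℝ) + 1)]
      have habs : ‖F k s‖ = (((k:ℝ) + 1) * |lam| ^ k / Real.Gamma (α * k + α + β - 1)) *
          (|Real.log (t - s) + γ₀| * s ^ (α * k + α + β - 2)) := by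
        rw [hFdef]
        show ‖_ * ((Real.log (t - s) + γ₀) * s ^ (α * k + α + β - 2))‖ = _
        rw [Real.norm_eq_abs, abs_mul, hC, abs_mul,
          abs_of_pos (Real.rpow_pos_of_pos hs0 _)]
      rw [habs, hDdef]
      have hexp : s ^ (α * k + α + β - 2) = s ^ (α * (k:ℝ)) * s ^ (α + β - 2) := by
        rw [← Real.rpow_add hs0]
        congr 1
        ring
      have hsle : s ^ (α * (k:ℝ)) ≤ t ^ (α * (k:ℝ)) :=
        Real.rpow_le_rpow hs0.le hs.2.le (by positivity)
      rw [hexp]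
      have h1 : (0:ℝ) ≤ ((k:ℝ) + 1) * |lam| ^ k / Real.Gamma (α * k + α + β - 1) := by
        positivity
      have h2 : (0:ℝ) ≤ |Real.log (t - s) + γ₀| := abs_nonneg _
      have h3 : (0:ℝ) ≤ s ^ (α + β - 2) := (Real.rpow_pos_of_pos hs0 _).le
      calc (((k:ℝ) + 1) * |lam| ^ k / Real.Gamma (α * k + α + β - 1)) *
          (|Real.log (t - s) + γ₀| * (s ^ (α * (k:ℝ)) * s ^ (α + β - 2)))
          ≤ (((k:ℝ) + 1) * |lam| ^ k / Real.Gamma (α * k + α + β - 1)) *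
            (|Real.log (t - s) + γ₀| * (t ^ (α * (k:ℝ)) * s ^ (α + β - 2))) := by
            apply mul_le_mul_of_nonneg_left _ h1
            apply mul_le_mul_of_nonneg_left _ h2
            exact mul_le_mul_of_nonneg_right hsle h3
        _ = ((k:ℝ) + 1) * |lam| ^ k / Real.Gamma (α * k + α + β - 1) * t ^ (α * (k:ℝ)) *
            (|Real.log (t - s) + γ₀| * s ^ (α + β - 2)) := by ring
    have hint1 : IntegrableOn (fun s => ‖F k s‖) (Ioo (0:ℝ) t) volume := (hFint k).norm
    have hint2 : IntegrableOn
        (fun s => D * (|Real.log (t - s) + γ₀| * s ^ (α + β - 2))) (Ioo (0:ℝ) t) volume :=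
      hBint.const_mul D
    have := setIntegral_mono_on hint1 hint2 measurableSet_Ioo hmono
    rw [MeasureTheory.integral_const_mul] at this
    calc (∫ s in Ioo (0:ℝ) t, ‖F k s‖) ≤ D * B := this
      _ = (((k:ℝ) + 1) * (|lam| * t ^ α) ^ k / Real.Gamma (α * k + α + β - 1)) * B := by
        rw [hDdef, mul_pow, htα k]
        ring
  have hmaj : Summable (fun k : ℕ =>
      (((k:ℝ) + 1) * (|lam| * t ^ α) ^ k / Real.Gamma (α * k + α + β - 1)) * B) := by
    have h := (summable_ml hα hc0 (|lam| * t ^ α)).mul_right B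
    apply h.congr
    intro k
    rw [show α * (k:ℝ) + (α + β - 1) = α * k + α + β - 1 from by ring]
  have hFsum : Summable (fun k : ℕ => ∫ s in Ioo (0:ℝ) t, ‖F k s‖) :=
    Summable.of_nonneg_of_le (fun k => integral_nonneg fun s => norm_nonneg _)
      hnormbound hmaj
  have hswap := MeasureTheory.integral_tsum_of_summable_integral_norm hFint hFsum
  -- pointwise identification of the RHS integrand with the series of F k
  have hpt : ∀ s ∈ Ioo (0:ℝ) t,
      (Real.log (t - s) + γ₀) * s ^ (α + β - 2) *
        (∑' k : ℕ, ((k:ℝ) + 1) * (lam * s ^ α) ^ k / Real.Gamma (α * k + α + β - 1))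
      = ∑' k : ℕ, F k s := by
    intro s hs
    have hs0 : (0:ℝ) < s := hs.1
    rw [← tsum_mul_left]
    apply tsum_congr
    intro k
    rw [hFdef]
    simp only []
    have hspow : (s ^ α) ^ k = s ^ (α * (k:ℝ)) := by
      rw [← Real.rpow_natCast (s ^ α) k, ← Real.rpow_mul hs0.le]
    have hexp : s ^ (α * k + α + β - 2) = s ^ (α * (k:ℝ)) * s ^ (α + β - 2) := by
      rw [← Real.rpow_add hs0]
      congr 1
      ring
    rw [mul_pow, hspow, hexp]
    ring
  -- compute each integral
  have hval : ∀ k : ℕ, (∫ s in Ioo (0:ℝ) t, F k s) =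
      (((k:ℝ) + 1) * lam ^ k / Real.Gamma (α * k + α + β - 1)) *
        (t ^ (α * k + α + β - 1) / (α * k + α + β - 1) *
          (Real.log t - digamma ((α * k + α + β - 1) + 1))) := by
    intro k
    rw [hFdef]
    simp only []
    rw [MeasureTheory.integral_const_mul]
    congr 1
    rw [show α * (k:ℝ) + α + β - 2 = (α * k + α + β - 1) - 1 from by ring]
    exact key_integral (hμk k) ht
  -- reindex the LHS
  set a : ℕ → ℝ := fun k => (k : ℝ) * lam ^ k * t ^ (α * k + β - 1) *
      (Real.log t - digamma (α * k + β)) / Real.Gamma (α * k + β) with hadef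
  have hsupp : Function.support a ⊆ Set.range Nat.succ := by
    intro k hk
    cases k with
    | zero =>
      exfalso
      apply hk
      show ((0:ℕ) : ℝ) * lam ^ 0 * t ^ (α * (0:ℕ) + β - 1) *
        (Real.log t - digamma (α * (0:ℕ) + β)) / Real.Gamma (α * (0:ℕ) + β) = 0
      simp
    | succ n => exact ⟨n, rfl⟩
  have hre := Nat.succ_injective.tsum_eq (f := a) hsupp
  calc (∑' k : ℕ, a k) = ∑' k : ℕ, a (Nat.succ k) := hre.symm
    _ = ∑' k : ℕ, lam * ((((k:ℝ) + 1) * lam ^ k / Real.Gamma (α * k + α + β - 1)) *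
        (t ^ (α * k + α + β - 1) / (α * k + α + β - 1) *
          (Real.log t - digamma ((α * k + α + β - 1) + 1)))) := by
      apply tsum_congr
      intro k
      rw [hadef]
      show ((Nat.succ k : ℕ) : ℝ) * lam ^ (Nat.succ k) *
          t ^ (α * (Nat.succ k : ℕ) + β - 1) *
          (Real.log t - digamma (α * (Nat.succ k : ℕ) + β)) /
          Real.Gamma (α * (Nat.succ k : ℕ) + β) = _
      have hcast : ((Nat.succ k : ℕ) : ℝ) = (k : ℝ) + 1 := by push_cast; ring
      rw [hcast]
      rw [show α * ((k:ℝ) + 1) + β - 1 = α * k + α + β - 1 from by ring,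
        show α * ((k:ℝ) + 1) + β = (α * k + α + β - 1) + 1 from by ring]
      have hG : 0 < Real.Gamma (α * k + α + β - 1) := Real.Gamma_pos_of_pos (hμk k)
      rw [Real.Gamma_add_one (hμk k).ne']
      rw [pow_succ]
      field_simp
    _ = lam * ∑' k : ℕ, ((((k:ℝ) + 1) * lam ^ k / Real.Gamma (α * k + α + β - 1)) *
        (t ^ (α * k + α + β - 1) / (α * k + α + β - 1) *
          (Real.log t - digamma ((α * k + α + β - 1) + 1)))) := tsum_mul_left
    _ = lam * ∑' k : ℕ, ∫ s in Ioo (0:ℝ) t, F k s := by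
      rw [tsum_congr hval]
    _ = lam * ∫ s in Ioo (0:ℝ) t, ∑' k : ℕ, F k s := by rw [hswap]
    _ = lam * ∫ t₁ in (0:ℝ)..t,
          (Real.log (t - t₁) + γ₀) * t₁ ^ (α + β - 2) *
            ∑' k : ℕ, ((k:ℝ) + 1) * (lam * t₁ ^ α) ^ k /
              Real.Gamma (α * k + α + β - 1) := by
      congr 1
      rw [intervalIntegral.integral_of_le ht.le, integral_Ioc_eq_integral_Ioo]
      exact (setIntegral_congr_fun measurableSet_Ioo (fun s hs => (hpt s hs))).symm
end
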